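/- arXiv:2108.10522 — 3 statements merged into one kernel-verified Lean document; each statement's English description precedes it below -/
import Mathlib

section
/- On a non-degenerate triangle T with barycentric coordinates λ1, λ2, λ3, the space P^{2-}(T) := P1(T)^2 ⊕ span{λi λj t_k : {i,j,k}={1,2,3}} (t_k the unit tangent of edge e_k) coincides with the space of vector-valued quadratic polynomials on T whose normal component on each edge e_i of T is a polynomial of degree at most 1 along that edge. -/
set_option maxHeartbeats 1000000


open MeasureTheory
open scoped Classical

noncomputable section

/-- The plane. -/
abbrev V2 : Type := ℝ × ℝ

/-- Euclidean dot product on the plane. -/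
def dot2 (u v : V2) : ℝ := u.1 * v.1 + u.2 * v.2

/-- 2D cross product. -/
def cross2 (u v : V2) : ℝ := u.1 * v.2 - u.2 * v.1

/-- Euclidean norm on the plane. -/
def enorm2 (u : V2) : ℝ := Real.sqrt (u.1 ^ 2 + u.2 ^ 2)

/-- `f` is (the restriction of) a polynomial of total degree at most `k`. -/
def IsPolyDeg (k : ℕ) (f : V2 → ℝ) : Prop :=
  ∃ p : MvPolynomial (Fin 2) ℝ, p.totalDegree ≤ k ∧
    ∀ x : V2, f x = MvPolynomial.eval (fun i : Fin 2 => if i = 0 then x.1 else x.2) p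

/-- A vector field whose two components are polynomials of degree at most `k`. -/
def IsVPolyDeg (k : ℕ) (v : V2 → V2) : Prop :=
  IsPolyDeg k (fun x => (v x).1) ∧ IsPolyDeg k (fun x => (v x).2)

/-- partial derivative in the `x` direction -/
def pd1 (f : V2 → ℝ) (x : V2) : ℝ := fderiv ℝ f x (1, 0)

/-- partial derivative in the `y` direction -/
def pd2 (f : V2 → ℝ) (x : V2) : ℝ := fderiv ℝ f x (0, 1)

/-- `curl` of a scalar function: `(∂w/∂y, -∂w/∂x)`. -/
def curl2 (w : V2 → ℝ) : V2 → V2 := fun x => (pd2 w x, - pd1 w x)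

/-- divergence of a planar vector field -/
def div2 (v : V2 → V2) (x : V2) : ℝ :=
  pd1 (fun y => (v y).1) x + pd2 (fun y => (v y).2) x

/-- Parametrization of the segment from `p` to `q`. -/
def seg (p q : V2) (s : ℝ) : V2 := p + s • (q - p)

/-- A non-degenerate triangle, together with its barycentric coordinates `lam i`,
unit outward normals `nrm i` and unit tangents `tang i` of the edges `e i`
(the edge `e i` being opposite the vertex `a i`, joining `a (i+1)` and `a (i+2)`),
oriented so that `nrm i × tang i > 0`. -/
structure Triangle where
  a : Fin 3 → V2
  indep : AffineIndependent ℝ a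
  lam : Fin 3 → V2 → ℝ
  lam_affine : ∀ i, ∃ (L : V2 →ₗ[ℝ] ℝ) (c : ℝ), ∀ x, lam i x = L x + c
  lam_apply : ∀ i j, lam i (a j) = if i = j then (1 : ℝ) else 0
  nrm : Fin 3 → V2
  tang : Fin 3 → V2
  nrm_unit : ∀ i, enorm2 (nrm i) = 1
  tang_unit : ∀ i, enorm2 (tang i) = 1
  tang_parallel : ∀ i, ∃ c : ℝ, a (i + 2) - a (i + 1) = c • tang i
  nrm_orth : ∀ i, dot2 (nrm i) (tang i) = 0
  nrm_outward : ∀ i, dot2 (nrm i) (a i - a (i + 1)) < 0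
  orient : ∀ i, 0 < cross2 (nrm i) (tang i)

/-- The (closed) triangle as a subset of the plane. -/
def triSet (T : Triangle) : Set V2 := convexHull ℝ (Set.range T.a)

/-- Parametrization of the edge `e i` of `T` (from `a (i+1)` to `a (i+2)`). -/
def epara (T : Triangle) (i : Fin 3) (s : ℝ) : V2 := seg (T.a (i + 1)) (T.a (i + 2)) s

/-- Length of edge `e i`. -/
def elen (T : Triangle) (i : Fin 3) : ℝ := enorm2 (T.a (i + 2) - T.a (i + 1))

/-- Area of the triangle. -/
def areaT (T : Triangle) : ℝ := |cross2 (T.a 1 - T.a 0) (T.a 2 - T.a 0)| / 2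

/-- The normal component of `v` on each edge of `T` is a polynomial of degree at
most one along that edge. -/
def NormalP1 (T : Triangle) (v : V2 → V2) : Prop :=
  ∀ i : Fin 3, ∃ α β : ℝ, ∀ s ∈ Set.Icc (0 : ℝ) 1,
    dot2 (v (epara T i s)) (T.nrm i) = α + β * s

/-- Membership in `P^{2-}(T)`: vector-valued quadratic polynomials whose normal
components on the edges are of degree at most one. -/
def memP2m (T : Triangle) (v : V2 → V2) : Prop := IsVPolyDeg 2 v ∧ NormalP1 T v

def Q1 (f : V2 → ℝ) : Prop := ∃ a b c : ℝ, ∀ x : V2, f x = a * x.1 + b * x.2 + c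

def Q2 (f : V2 → ℝ) : Prop := ∃ a b c d e g : ℝ, ∀ x : V2,
  f x = a * x.1 ^ 2 + b * (x.1 * x.2) + c * x.2 ^ 2 + d * x.1 + e * x.2 + g

lemma q2_add {f g : V2 → ℝ} (hf : Q2 f) (hg : Q2 g) : Q2 (fun x => f x + g x) := by
  obtain ⟨a, b, c, d, e, k, hf⟩ := hf
  obtain ⟨a', b', c', d', e', k', hg⟩ := hg
  exact ⟨a + a', b + b', c + c', d + d', e + e', k + k', fun x => by
    show f x + g x = _; rw [hf, hg]; ring⟩

lemma q1_add {f g : V2 → ℝ} (hf : Q1 f) (hg : Q1 g) : Q1 (fun x => f x + g x) := by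
  obtain ⟨a, b, c, hf⟩ := hf
  obtain ⟨a', b', c', hg⟩ := hg
  exact ⟨a + a', b + b', c + c', fun x => by show f x + g x = _; rw [hf, hg]; ring⟩

lemma q2_mono {i j : ℕ} (h : i + j ≤ 2) (c : ℝ) :
    Q2 (fun x : V2 => c * (x.1 ^ i * x.2 ^ j)) := by
  have hi : i ≤ 2 := le_trans (Nat.le_add_right _ _) h
  have hj : j ≤ 2 := le_trans (Nat.le_add_left _ _) h
  interval_cases i <;> interval_cases j
  · exact ⟨0,0,0,0,0,c, fun x => by ring⟩
  · exact ⟨0,0,0,0,c,0, fun x => by ring⟩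
  · exact ⟨0,0,c,0,0,0, fun x => by ring⟩
  · exact ⟨0,0,0,c,0,0, fun x => by ring⟩
  · exact ⟨0,c,0,0,0,0, fun x => by ring⟩
  · exact absurd h (by omega)
  · exact ⟨c,0,0,0,0,0, fun x => by ring⟩
  · exact absurd h (by omega)
  · exact absurd h (by omega)

lemma q1_mono {i j : ℕ} (h : i + j ≤ 1) (c : ℝ) :
    Q1 (fun x : V2 => c * (x.1 ^ i * x.2 ^ j)) := by
  have hi : i ≤ 1 := le_trans (Nat.le_add_right _ _) h
  have hj : j ≤ 1 := le_trans (Nat.le_add_left _ _) h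
  interval_cases i <;> interval_cases j
  · exact ⟨0,0,c, fun x => by ring⟩
  · exact ⟨0,c,0, fun x => by ring⟩
  · exact ⟨c,0,0, fun x => by ring⟩
  · exact absurd h (by omega)

lemma q2_sum (s : Finset (Fin 2 →₀ ℕ)) (c : (Fin 2 →₀ ℕ) → ℝ)
    (h : ∀ m ∈ s, m 0 + m 1 ≤ 2) :
    Q2 (fun x : V2 => ∑ m ∈ s, c m * (x.1 ^ m 0 * x.2 ^ m 1)) := by
  classical
  induction s using Finset.induction with
  | empty => exact ⟨0,0,0,0,0,0, fun x => by simp⟩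
  | @insert m s hm ih =>
    simp only [Finset.sum_insert hm]
    exact q2_add (q2_mono (h m (Finset.mem_insert_self m s)) _)
      (ih fun m' hm' => h m' (Finset.mem_insert_of_mem hm'))

lemma q1_sum (s : Finset (Fin 2 →₀ ℕ)) (c : (Fin 2 →₀ ℕ) → ℝ)
    (h : ∀ m ∈ s, m 0 + m 1 ≤ 1) :
    Q1 (fun x : V2 => ∑ m ∈ s, c m * (x.1 ^ m 0 * x.2 ^ m 1)) := by
  classical
  induction s using Finset.induction with
  | empty => exact ⟨0,0,0, fun x => by simp⟩
  | @insert m s hm ih =>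
    simp only [Finset.sum_insert hm]
    exact q1_add (q1_mono (h m (Finset.mem_insert_self m s)) _)
      (ih fun m' hm' => h m' (Finset.mem_insert_of_mem hm'))

lemma eval_expand (p : MvPolynomial (Fin 2) ℝ) (x : V2) :
    MvPolynomial.eval (fun i : Fin 2 => if i = 0 then x.1 else x.2) p
      = ∑ m ∈ p.support, MvPolynomial.coeff m p * (x.1 ^ m 0 * x.2 ^ m 1) := by
  rw [MvPolynomial.eval_eq]
  refine Finset.sum_congr rfl fun m _ => ?_
  congr 1
  rw [show (∏ i ∈ m.support, (if i = 0 then x.1 else x.2) ^ m i)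
      = ∏ i : Fin 2, (if i = 0 then x.1 else x.2) ^ m i from
    (Finset.prod_subset (Finset.subset_univ _) fun i _ hi => by
      simp [Finsupp.notMem_support_iff.mp hi])]
  rw [Fin.prod_univ_two]
  norm_num

lemma support_bound {k : ℕ} {p : MvPolynomial (Fin 2) ℝ} (hp : p.totalDegree ≤ k)
    {m : Fin 2 →₀ ℕ} (hm : m ∈ p.support) : m 0 + m 1 ≤ k := by
  have h1 := MvPolynomial.le_totalDegree hm
  have h2 : (m.sum fun _ e => e) = m 0 + m 1 := by
    rw [Finsupp.sum_fintype _ _ (fun _ => rfl), Fin.sum_univ_two]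
  omega

lemma tdeg_term (a : ℝ) (i j : ℕ) :
    (MvPolynomial.C a * (MvPolynomial.X 0 ^ i * MvPolynomial.X 1 ^ j)
      : MvPolynomial (Fin 2) ℝ).totalDegree ≤ i + j := by
  refine le_trans (MvPolynomial.totalDegree_mul _ _) ?_
  rw [MvPolynomial.totalDegree_C, zero_add]
  refine le_trans (MvPolynomial.totalDegree_mul _ _) (add_le_add ?_ ?_) <;>
    exact le_trans (MvPolynomial.totalDegree_pow _ _)
      (by rw [MvPolynomial.totalDegree_X]; simp)

lemma isPolyDeg_two_iff (f : V2 → ℝ) : IsPolyDeg 2 f ↔ Q2 f := by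
  constructor
  · rintro ⟨p, hdeg, hf⟩
    have : f = fun x => ∑ m ∈ p.support, MvPolynomial.coeff m p * (x.1 ^ m 0 * x.2 ^ m 1) :=
      funext fun x => by rw [hf, eval_expand]
    rw [this]
    exact q2_sum _ _ fun m hm => support_bound hdeg hm
  · rintro ⟨a, b, c, d, e, g, hf⟩
    refine ⟨MvPolynomial.C a * (MvPolynomial.X 0 ^ 2 * MvPolynomial.X 1 ^ 0)
      + MvPolynomial.C b * (MvPolynomial.X 0 ^ 1 * MvPolynomial.X 1 ^ 1)
      + MvPolynomial.C c * (MvPolynomial.X 0 ^ 0 * MvPolynomial.X 1 ^ 2)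
      + MvPolynomial.C d * (MvPolynomial.X 0 ^ 1 * MvPolynomial.X 1 ^ 0)
      + MvPolynomial.C e * (MvPolynomial.X 0 ^ 0 * MvPolynomial.X 1 ^ 1)
      + MvPolynomial.C g * (MvPolynomial.X 0 ^ 0 * MvPolynomial.X 1 ^ 0), ?_, fun x => ?_⟩
    · refine le_trans (MvPolynomial.totalDegree_add _ _) (max_le ?_ (le_trans (tdeg_term _ _ _) (by norm_num)))
      refine le_trans (MvPolynomial.totalDegree_add _ _) (max_le ?_ (le_trans (tdeg_term _ _ _) (by norm_num)))
      refine le_trans (MvPolynomial.totalDegree_add _ _) (max_le ?_ (le_trans (tdeg_term _ _ _) (by norm_num)))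
      refine le_trans (MvPolynomial.totalDegree_add _ _) (max_le ?_ (le_trans (tdeg_term _ _ _) (by norm_num)))
      exact le_trans (MvPolynomial.totalDegree_add _ _) (max_le (le_trans (tdeg_term _ _ _) (by norm_num)) (le_trans (tdeg_term _ _ _) (by norm_num)))
    · rw [hf]
      simp only [map_add, map_mul, map_pow, MvPolynomial.eval_C, MvPolynomial.eval_X]
      norm_num

lemma isPolyDeg_one_iff (f : V2 → ℝ) : IsPolyDeg 1 f ↔ Q1 f := by
  constructor
  · rintro ⟨p, hdeg, hf⟩
    have : f = fun x => ∑ m ∈ p.support, MvPolynomial.coeff m p * (x.1 ^ m 0 * x.2 ^ m 1) :=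
      funext fun x => by rw [hf, eval_expand]
    rw [this]
    exact q1_sum _ _ fun m hm => support_bound hdeg hm
  · rintro ⟨a, b, c, hf⟩
    refine ⟨MvPolynomial.C a * (MvPolynomial.X 0 ^ 1 * MvPolynomial.X 1 ^ 0)
      + MvPolynomial.C b * (MvPolynomial.X 0 ^ 0 * MvPolynomial.X 1 ^ 1)
      + MvPolynomial.C c * (MvPolynomial.X 0 ^ 0 * MvPolynomial.X 1 ^ 0), ?_, fun x => ?_⟩
    · refine le_trans (MvPolynomial.totalDegree_add _ _) (max_le ?_ (le_trans (tdeg_term _ _ _) (by norm_num)))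
      exact le_trans (MvPolynomial.totalDegree_add _ _) (max_le (le_trans (tdeg_term _ _ _) (by norm_num)) (le_trans (tdeg_term _ _ _) (by norm_num)))
    · rw [hf]
      simp only [map_add, map_mul, map_pow, MvPolynomial.eval_C, MvPolynomial.eval_X]
      norm_num

lemma quadform_zero {a b c x1 y1 x2 y2 : ℝ} (hD : x1 * y2 - x2 * y1 ≠ 0)
    (h1 : a * x1 ^ 2 + b * (x1 * y1) + c * y1 ^ 2 = 0)
    (h2 : a * x2 ^ 2 + b * (x2 * y2) + c * y2 ^ 2 = 0)
    (h3 : a * (x1 + x2) ^ 2 + b * ((x1 + x2) * (y1 + y2)) + c * (y1 + y2) ^ 2 = 0) :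
    a = 0 ∧ b = 0 ∧ c = 0 := by
  have hD3 : (x1 * y2 - x2 * y1) ^ 3 ≠ 0 := pow_ne_zero _ hD
  have ha : a * (x1 * y2 - x2 * y1) ^ 3 = 0 := by
    linear_combination (x1*y2^3 + x1*y1*y2^2 - y1*x2*y2^2 - y1^2*x2*y2) * h1
      + (x1*y1*y2^2 + x1*y1^2*y2 - y1^2*x2*y2 - y1^3*x2) * h2
      + (y1^2*x2*y2 - x1*y1*y2^2) * h3
  have hb : b * (x1 * y2 - x2 * y1) ^ 3 = 0 := by
    linear_combination (2*y1*x2^2*y2 + y1^2*x2^2 - 2*x1*x2*y2^2 - x1^2*y2^2) * h1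
      + (y1^2*x2^2 + 2*x1*y1^2*x2 - x1^2*y2^2 - 2*x1^2*y1*y2) * h2
      + (x1^2*y2^2 - y1^2*x2^2) * h3
  have hc : c * (x1 * y2 - x2 * y1) ^ 3 = 0 := by
    linear_combination (x1*x2^2*y2 + x1^2*x2*y2 - y1*x2^3 - x1*y1*x2^2) * h1
      + (x1^2*x2*y2 + x1^3*y2 - x1*y1*x2^2 - x1^2*y1*x2) * h2
      + (x1*y1*x2^2 - x1^2*x2*y2) * h3
  refine ⟨?_, ?_, ?_⟩
  · rcases mul_eq_zero.mp ha with h | h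
    · exact h
    · exact absurd h hD3
  · rcases mul_eq_zero.mp hb with h | h
    · exact h
    · exact absurd h hD3
  · rcases mul_eq_zero.mp hc with h | h
    · exact h
    · exact absurd h hD3

lemma affine_vanish {al be x1 y1 x2 y2 : ℝ} (hD : x1 * y2 - x2 * y1 ≠ 0)
    (h1 : al * x1 + be * y1 = 0) (h2 : al * x2 + be * y2 = 0) :
    al = 0 ∧ be = 0 := by
  have ha : al * (x1 * y2 - x2 * y1) = 0 := by linear_combination y2 * h1 - y1 * h2
  have hb : be * (x1 * y2 - x2 * y1) = 0 := by linear_combination x1 * h2 - x2 * h1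
  constructor
  · rcases mul_eq_zero.mp ha with h | h
    · exact h
    · exact absurd h hD
  · rcases mul_eq_zero.mp hb with h | h
    · exact h
    · exact absurd h hD

lemma prod_subst {P1 Q1 P2 Q2 w1 w2 v1 v2 : ℝ} (h1 : P1*w1 + Q1*w2 = v1)
    (h2 : P2*w1 + Q2*w2 = v2) : (P1*w1 + Q1*w2) * (P2*w1 + Q2*w2) = v1 * v2 := by
  rw [h1, h2]

/-- `P^{2-}(T)` coincides with `P1(T)² ⊕ span{λ_{k+1} λ_{k+2} t_k : k}`
(the `∃!` expresses that the decomposition exists and is unique, i.e. the sum is direct). -/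
theorem stmt0 (T : Triangle) (v : V2 → V2) :
    memP2m T v ↔
      ∃! pc : (V2 → V2) × (Fin 3 → ℝ),
        IsVPolyDeg 1 pc.1 ∧
        ∀ x, v x = pc.1 x +
          ∑ k : Fin 3, (pc.2 k * (T.lam (k + 1) x * T.lam (k + 2) x)) • T.tang k := by
  classical
  -- barycentric coordinates in coordinates
  choose L con hLaff using T.lam_affine
  set lamP : Fin 3 → ℝ := fun i => L i ((1:ℝ), (0:ℝ)) with hlamPdef
  set lamQ : Fin 3 → ℝ := fun i => L i ((0:ℝ), (1:ℝ)) with hlamQdef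
  have hlam : ∀ i (x : V2), T.lam i x = lamP i * x.1 + lamQ i * x.2 + con i := by
    intro i x
    rw [hLaff]
    have hx : x = x.1 • (((1:ℝ), (0:ℝ)) : V2) + x.2 • (((0:ℝ), (1:ℝ)) : V2) := by
      apply Prod.ext <;> simp
    congr 1
    conv_lhs => rw [hx]
    rw [map_add, _root_.map_smul, _root_.map_smul]
    simp only [smul_eq_mul, hlamPdef, hlamQdef]
    ring
  have hLA : ∀ j i : Fin 3,
      lamP j * (T.a i).1 + lamQ j * (T.a i).2 + con j = if j = i then (1:ℝ) else 0 := by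
    intro j i
    rw [← hlam]
    exact T.lam_apply j i
  -- reduced vertex equations
  have hLA00 : lamP 0 * (T.a 0).1 + lamQ 0 * (T.a 0).2 + con 0 = 1 := by simpa using hLA 0 0
  have hLA01 : lamP 0 * (T.a 1).1 + lamQ 0 * (T.a 1).2 + con 0 = 0 := by simpa using hLA 0 1
  have hLA02 : lamP 0 * (T.a 2).1 + lamQ 0 * (T.a 2).2 + con 0 = 0 := by simpa using hLA 0 2
  have hLA10 : lamP 1 * (T.a 0).1 + lamQ 1 * (T.a 0).2 + con 1 = 0 := by simpa using hLA 1 0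
  have hLA11 : lamP 1 * (T.a 1).1 + lamQ 1 * (T.a 1).2 + con 1 = 1 := by simpa using hLA 1 1
  have hLA12 : lamP 1 * (T.a 2).1 + lamQ 1 * (T.a 2).2 + con 1 = 0 := by simpa using hLA 1 2
  have hLA20 : lamP 2 * (T.a 0).1 + lamQ 2 * (T.a 0).2 + con 2 = 0 := by simpa using hLA 2 0
  have hLA21 : lamP 2 * (T.a 1).1 + lamQ 2 * (T.a 1).2 + con 2 = 0 := by simpa using hLA 2 1
  have hLA22 : lamP 2 * (T.a 2).1 + lamQ 2 * (T.a 2).2 + con 2 = 1 := by simpa using hLA 2 2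
  -- non-degeneracy
  have hkey : (lamP 1 * lamQ 2 - lamP 2 * lamQ 1) *
      (((T.a 1).1 - (T.a 0).1) * ((T.a 2).2 - (T.a 0).2)
        - ((T.a 2).1 - (T.a 0).1) * ((T.a 1).2 - (T.a 0).2)) = 1 := by
    have e11 : lamP 1 * ((T.a 1).1 - (T.a 0).1) + lamQ 1 * ((T.a 1).2 - (T.a 0).2) = 1 := by
      linear_combination hLA11 - hLA10
    have e12 : lamP 1 * ((T.a 2).1 - (T.a 0).1) + lamQ 1 * ((T.a 2).2 - (T.a 0).2) = 0 := by
      linear_combination hLA12 - hLA10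
    have e21 : lamP 2 * ((T.a 1).1 - (T.a 0).1) + lamQ 2 * ((T.a 1).2 - (T.a 0).2) = 0 := by
      linear_combination hLA21 - hLA20
    have e22 : lamP 2 * ((T.a 2).1 - (T.a 0).1) + lamQ 2 * ((T.a 2).2 - (T.a 0).2) = 1 := by
      linear_combination hLA22 - hLA20
    linear_combination (lamP 2 * ((T.a 2).1 - (T.a 0).1) + lamQ 2 * ((T.a 2).2 - (T.a 0).2)) * e11
      + e22 - (lamP 1 * ((T.a 2).1 - (T.a 0).1) + lamQ 1 * ((T.a 2).2 - (T.a 0).2)) * e21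
  have hD : ((T.a 1).1 - (T.a 0).1) * ((T.a 2).2 - (T.a 0).2)
      - ((T.a 2).1 - (T.a 0).1) * ((T.a 1).2 - (T.a 0).2) ≠ 0 := by
    intro h
    rw [h, mul_zero] at hkey
    exact one_ne_zero hkey.symm
  -- unit normals/tangents
  have hn : ∀ i, (T.nrm i).1 ^ 2 + (T.nrm i).2 ^ 2 = 1 := by
    intro i
    have h := T.nrm_unit i
    rw [enorm2] at h
    have h1 : (T.nrm i).1 ^ 2 + (T.nrm i).2 ^ 2
        = Real.sqrt ((T.nrm i).1 ^ 2 + (T.nrm i).2 ^ 2) ^ 2 :=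
      (Real.sq_sqrt (by positivity)).symm
    rw [h, one_pow] at h1
    exact h1
  have htu : ∀ i, (T.tang i).1 ^ 2 + (T.tang i).2 ^ 2 = 1 := by
    intro i
    have h := T.tang_unit i
    rw [enorm2] at h
    have h1 : (T.tang i).1 ^ 2 + (T.tang i).2 ^ 2
        = Real.sqrt ((T.tang i).1 ^ 2 + (T.tang i).2 ^ 2) ^ 2 :=
      (Real.sq_sqrt (by positivity)).symm
    rw [h, one_pow] at h1
    exact h1
  have htang : ∀ i, T.tang i = (-(T.nrm i).2, (T.nrm i).1) := by
    intro i
    have ho := T.nrm_orth i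
    have hc := T.orient i
    rw [dot2] at ho
    rw [cross2] at hc
    have hsq : ((T.nrm i).1 * (T.tang i).2 - (T.nrm i).2 * (T.tang i).1) ^ 2 = 1 := by
      linear_combination ((T.tang i).1 ^ 2 + (T.tang i).2 ^ 2) * hn i + htu i
        - ((T.nrm i).1 * (T.tang i).1 + (T.nrm i).2 * (T.tang i).2) * ho
    have hcr : (T.nrm i).1 * (T.tang i).2 - (T.nrm i).2 * (T.tang i).1 = 1 := by
      nlinarith [hsq, hc, sq_nonneg ((T.nrm i).1 * (T.tang i).2 - (T.nrm i).2 * (T.tang i).1 - 1),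
        sq_nonneg ((T.nrm i).1 * (T.tang i).2 - (T.nrm i).2 * (T.tang i).1 + 1)]
    apply Prod.ext
    · show (T.tang i).1 = -(T.nrm i).2
      linear_combination (T.nrm i).1 * ho - (T.nrm i).2 * hcr - (T.tang i).1 * hn i
    · show (T.tang i).2 = (T.nrm i).1
      linear_combination (T.nrm i).2 * ho + (T.nrm i).1 * hcr - (T.tang i).2 * hn i
  -- lambda along edges
  have hsege : ∀ (j : Fin 3) (p q : V2) (s : ℝ),
      T.lam j (seg p q s) = (1 - s) * T.lam j p + s * T.lam j q := by
    intro j p q s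
    simp only [hlam, seg, Prod.fst_add, Prod.snd_add, Prod.smul_fst, Prod.smul_snd,
      Prod.fst_sub, Prod.snd_sub, smul_eq_mul]
    ring
  have hlam_epara : ∀ (i j : Fin 3) (s : ℝ),
      T.lam j (epara T i s) = (1 - s) * (if j = i + 1 then 1 else 0)
        + s * (if j = i + 2 then 1 else 0) := by
    intro i j s
    rw [epara, hsege, T.lam_apply, T.lam_apply]
  -- bubbles vanish at vertices
  have hBv : ∀ (k j : Fin 3), T.lam (k+1) (T.a j) * T.lam (k+2) (T.a j) = 0 := by
    intro k j
    have hne : (k + 1 : Fin 3) ≠ k + 2 := by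
      fin_cases k <;> decide
    simp only [T.lam_apply]
    by_cases h1 : (k + 1 : Fin 3) = j
    · have h2 : ¬((k + 2 : Fin 3) = j) := fun h2 => hne (h1.trans h2.symm)
      simp [h1, h2]
    · simp [h1]
  have hprodi : ∀ (i : Fin 3) (s : ℝ),
      T.lam (i+1) (epara T i s) * T.lam (i+2) (epara T i s) = (1-s) * s := by
    intro i s
    rw [hlam_epara, hlam_epara]
    fin_cases i <;> simp
  have hprod0 : ∀ (k i : Fin 3) (s : ℝ), k ≠ i →
      T.lam (k+1) (epara T i s) * T.lam (k+2) (epara T i s) = 0 := by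
    intro k i s hki
    rw [hlam_epara, hlam_epara]
    fin_cases k <;> fin_cases i <;> simp_all
  have hbub : ∀ (c : Fin 3 → ℝ) (i : Fin 3) (s : ℝ),
      (∑ k : Fin 3, (c k * (T.lam (k+1) (epara T i s) * T.lam (k+2) (epara T i s))) • T.tang k)
        = (c i * ((1-s) * s)) • T.tang i := by
    intro c i s
    rw [Finset.sum_eq_single i]
    · rw [hprodi i s]
    · intro b _ hbi
      rw [hprod0 b i s hbi, mul_zero, zero_smul]
    · simp
  -- uniqueness of the decomposition
  have huniq : ∀ (p₁ p₂ : V2 → V2) (c₁ c₂ : Fin 3 → ℝ),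
      IsVPolyDeg 1 p₁ → IsVPolyDeg 1 p₂ →
      (∀ x, p₁ x + ∑ k : Fin 3, (c₁ k * (T.lam (k + 1) x * T.lam (k + 2) x)) • T.tang k
          = p₂ x + ∑ k : Fin 3, (c₂ k * (T.lam (k + 1) x * T.lam (k + 2) x)) • T.tang k) →
      p₁ = p₂ ∧ c₁ = c₂ := by
    intro p₁ p₂ c₁ c₂ hp₁ hp₂ hall
    obtain ⟨hq11, hq12⟩ := hp₁
    obtain ⟨hq21, hq22⟩ := hp₂
    rw [isPolyDeg_one_iff] at hq11 hq12 hq21 hq22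
    obtain ⟨d1, e1, f1, hd1⟩ := hq11
    obtain ⟨d2, e2, f2, hd2⟩ := hq12
    obtain ⟨d1', e1', f1', hd1'⟩ := hq21
    obtain ⟨d2', e2', f2', hd2'⟩ := hq22
    have hd1 : ∀ x : V2, (p₁ x).1 = d1 * x.1 + e1 * x.2 + f1 := hd1
    have hd2 : ∀ x : V2, (p₁ x).2 = d2 * x.1 + e2 * x.2 + f2 := hd2
    have hd1' : ∀ x : V2, (p₂ x).1 = d1' * x.1 + e1' * x.2 + f1' := hd1'
    have hd2' : ∀ x : V2, (p₂ x).2 = d2' * x.1 + e2' * x.2 + f2' := hd2'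
    -- evaluate at vertices
    have hva : ∀ j : Fin 3, p₁ (T.a j) = p₂ (T.a j) := by
      intro j
      have h := hall (T.a j)
      simpa [hBv, Fin.sum_univ_three] using h
    have r0 : (p₁ (T.a 0)).1 = (p₂ (T.a 0)).1 := by rw [hva 0]
    have r1 : (p₁ (T.a 1)).1 = (p₂ (T.a 1)).1 := by rw [hva 1]
    have r2 : (p₁ (T.a 2)).1 = (p₂ (T.a 2)).1 := by rw [hva 2]
    have s0 : (p₁ (T.a 0)).2 = (p₂ (T.a 0)).2 := by rw [hva 0]
    have s1 : (p₁ (T.a 1)).2 = (p₂ (T.a 1)).2 := by rw [hva 1]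
    have s2 : (p₁ (T.a 2)).2 = (p₂ (T.a 2)).2 := by rw [hva 2]
    rw [hd1, hd1'] at r0 r1 r2
    rw [hd2, hd2'] at s0 s1 s2
    have hva1 := affine_vanish hD (al := d1 - d1') (be := e1 - e1')
      (by linear_combination r1 - r0) (by linear_combination r2 - r0)
    have hva2 := affine_vanish hD (al := d2 - d2') (be := e2 - e2')
      (by linear_combination s1 - s0) (by linear_combination s2 - s0)
    have hde1 : d1 = d1' := by linarith [hva1.1]
    have hee1 : e1 = e1' := by linarith [hva1.2]
    have hde2 : d2 = d2' := by linarith [hva2.1]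
    have hee2 : e2 = e2' := by linarith [hva2.2]
    have hf1 : f1 = f1' := by
      have := r0
      rw [hde1, hee1] at this
      linarith
    have hf2 : f2 = f2' := by
      have := s0
      rw [hde2, hee2] at this
      linarith
    have hpeq : p₁ = p₂ := by
      funext x
      apply Prod.ext
      · rw [hd1, hd1', hde1, hee1, hf1]
      · rw [hd2, hd2', hde2, hee2, hf2]
    refine ⟨hpeq, ?_⟩
    -- bubbles at midpoints
    have hSeq : ∀ x, (∑ k : Fin 3, (c₁ k * (T.lam (k + 1) x * T.lam (k + 2) x)) • T.tang k)
        = ∑ k : Fin 3, (c₂ k * (T.lam (k + 1) x * T.lam (k + 2) x)) • T.tang k := by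
      intro x
      have h := hall x
      rw [hpeq] at h
      exact add_left_cancel h
    funext k
    have hmid := hSeq (epara T k (1/2))
    rw [hbub c₁ k (1/2), hbub c₂ k (1/2)] at hmid
    have h1 := congrArg Prod.fst hmid
    have h2 := congrArg Prod.snd hmid
    simp only [Prod.smul_fst, Prod.smul_snd, smul_eq_mul] at h1 h2
    linear_combination 4 * (T.tang k).1 * h1 + 4 * (T.tang k).2 * h2 - (c₁ k - c₂ k) * htu k
  constructor
  · intro hmem
    obtain ⟨⟨hq1, hq2⟩, hN⟩ := hmem
    rw [isPolyDeg_two_iff] at hq1 hq2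
    obtain ⟨A1, B1, C1, D1, E1, F1, hv1⟩ := hq1
    obtain ⟨A2, B2, C2, D2, E2, F2, hv2⟩ := hq2
    have hv1 : ∀ x : V2, (v x).1 = A1 * x.1 ^ 2 + B1 * (x.1 * x.2) + C1 * x.2 ^ 2 + D1 * x.1 + E1 * x.2 + F1 := hv1
    have hv2 : ∀ x : V2, (v x).2 = A2 * x.1 ^ 2 + B2 * (x.1 * x.2) + C2 * x.2 ^ 2 + D2 * x.1 + E2 * x.2 + F2 := hv2
    have hK2 : ∀ i : Fin 3, (A1 * ((T.a (i+2)).1 - (T.a (i+1)).1) ^ 2 + B1 * (((T.a (i+2)).1 - (T.a (i+1)).1) * ((T.a (i+2)).2 - (T.a (i+1)).2)) + C1 * ((T.a (i+2)).2 - (T.a (i+1)).2) ^ 2) * (T.nrm i).1 + (A2 * ((T.a (i+2)).1 - (T.a (i+1)).1) ^ 2 + B2 * (((T.a (i+2)).1 - (T.a (i+1)).1) * ((T.a (i+2)).2 - (T.a (i+1)).2)) + C2 * ((T.a (i+2)).2 - (T.a (i+1)).2) ^ 2) * (T.nrm i).2 = 0 := by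
      intro i
      obtain ⟨al, be, hab⟩ := hN i
      have hx1 : ∀ s : ℝ, (epara T i s).1 = (T.a (i+1)).1 + s * ((T.a (i+2)).1 - (T.a (i+1)).1) := by
        intro s; simp [epara, seg]
      have hx2 : ∀ s : ℝ, (epara T i s).2 = (T.a (i+1)).2 + s * ((T.a (i+2)).2 - (T.a (i+1)).2) := by
        intro s; simp [epara, seg]
      have h0 := hab 0 (by norm_num)
      have hh := hab (1/2) (by norm_num)
      have h1 := hab 1 (by norm_num)
      rw [dot2, hv1, hv2, hx1 0, hx2 0] at h0
      rw [dot2, hv1, hv2, hx1 (1/2), hx2 (1/2)] at hh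
      rw [dot2, hv1, hv2, hx1 1, hx2 1] at h1
      linear_combination 2 * h0 + 2 * h1 - 4 * hh
    have hK20 : (A1 * ((T.a 2).1 - (T.a 1).1) ^ 2 + B1 * (((T.a 2).1 - (T.a 1).1) * ((T.a 2).2 - (T.a 1).2)) + C1 * ((T.a 2).2 - (T.a 1).2) ^ 2) * (T.nrm 0).1 + (A2 * ((T.a 2).1 - (T.a 1).1) ^ 2 + B2 * (((T.a 2).1 - (T.a 1).1) * ((T.a 2).2 - (T.a 1).2)) + C2 * ((T.a 2).2 - (T.a 1).2) ^ 2) * (T.nrm 0).2 = 0 := by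
      have h := hK2 0
      simp only [Fin.isValue, Fin.reduceAdd] at h
      exact h
    have hK21 : (A1 * ((T.a 0).1 - (T.a 2).1) ^ 2 + B1 * (((T.a 0).1 - (T.a 2).1) * ((T.a 0).2 - (T.a 2).2)) + C1 * ((T.a 0).2 - (T.a 2).2) ^ 2) * (T.nrm 1).1 + (A2 * ((T.a 0).1 - (T.a 2).1) ^ 2 + B2 * (((T.a 0).1 - (T.a 2).1) * ((T.a 0).2 - (T.a 2).2)) + C2 * ((T.a 0).2 - (T.a 2).2) ^ 2) * (T.nrm 1).2 = 0 := by
      have h := hK2 1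
      simp only [Fin.isValue, Fin.reduceAdd] at h
      exact h
    have hK22 : (A1 * ((T.a 1).1 - (T.a 0).1) ^ 2 + B1 * (((T.a 1).1 - (T.a 0).1) * ((T.a 1).2 - (T.a 0).2)) + C1 * ((T.a 1).2 - (T.a 0).2) ^ 2) * (T.nrm 2).1 + (A2 * ((T.a 1).1 - (T.a 0).1) ^ 2 + B2 * (((T.a 1).1 - (T.a 0).1) * ((T.a 1).2 - (T.a 0).2)) + C2 * ((T.a 1).2 - (T.a 0).2) ^ 2) * (T.nrm 2).2 = 0 := by
      have h := hK2 2
      simp only [Fin.isValue, Fin.reduceAdd] at h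
      exact h
    obtain ⟨c0, hc0⟩ : ∃ c : ℝ, c = ((A1 * ((T.a 2).1 - (T.a 1).1) ^ 2 + B1 * (((T.a 2).1 - (T.a 1).1) * ((T.a 2).2 - (T.a 1).2)) + C1 * ((T.a 2).2 - (T.a 1).2) ^ 2) * (T.nrm 0).2 - (A2 * ((T.a 2).1 - (T.a 1).1) ^ 2 + B2 * (((T.a 2).1 - (T.a 1).1) * ((T.a 2).2 - (T.a 1).2)) + C2 * ((T.a 2).2 - (T.a 1).2) ^ 2) * (T.nrm 0).1) := ⟨_, rfl⟩
    obtain ⟨c1, hc1⟩ : ∃ c : ℝ, c = ((A1 * ((T.a 0).1 - (T.a 2).1) ^ 2 + B1 * (((T.a 0).1 - (T.a 2).1) * ((T.a 0).2 - (T.a 2).2)) + C1 * ((T.a 0).2 - (T.a 2).2) ^ 2) * (T.nrm 1).2 - (A2 * ((T.a 0).1 - (T.a 2).1) ^ 2 + B2 * (((T.a 0).1 - (T.a 2).1) * ((T.a 0).2 - (T.a 2).2)) + C2 * ((T.a 0).2 - (T.a 2).2) ^ 2) * (T.nrm 1).1) := ⟨_, rfl⟩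
    obtain ⟨c2, hc2⟩ : ∃ c : ℝ, c = ((A1 * ((T.a 1).1 - (T.a 0).1) ^ 2 + B1 * (((T.a 1).1 - (T.a 0).1) * ((T.a 1).2 - (T.a 0).2)) + C1 * ((T.a 1).2 - (T.a 0).2) ^ 2) * (T.nrm 2).2 - (A2 * ((T.a 1).1 - (T.a 0).1) ^ 2 + B2 * (((T.a 1).1 - (T.a 0).1) * ((T.a 1).2 - (T.a 0).2)) + C2 * ((T.a 1).2 - (T.a 0).2) ^ 2) * (T.nrm 2).1) := ⟨_, rfl⟩
    have htg1 : ∀ k : Fin 3, (T.tang k).1 = -(T.nrm k).2 := fun k => by rw [htang k]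
    have htg2 : ∀ k : Fin 3, (T.tang k).2 = (T.nrm k).1 := fun k => by rw [htang k]
    have hH10 : (A1 * ((T.a 2).1 - (T.a 1).1) ^ 2 + B1 * (((T.a 2).1 - (T.a 1).1) * ((T.a 2).2 - (T.a 1).2)) + C1 * ((T.a 2).2 - (T.a 1).2) ^ 2) + c0 * (T.tang 0).1 = 0 := by
      rw [htg1 0, hc0]
      linear_combination (T.nrm 0).1 * hK20 - (A1 * ((T.a 2).1 - (T.a 1).1) ^ 2 + B1 * (((T.a 2).1 - (T.a 1).1) * ((T.a 2).2 - (T.a 1).2)) + C1 * ((T.a 2).2 - (T.a 1).2) ^ 2) * hn 0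
    have hH20 : (A2 * ((T.a 2).1 - (T.a 1).1) ^ 2 + B2 * (((T.a 2).1 - (T.a 1).1) * ((T.a 2).2 - (T.a 1).2)) + C2 * ((T.a 2).2 - (T.a 1).2) ^ 2) + c0 * (T.tang 0).2 = 0 := by
      rw [htg2 0, hc0]
      linear_combination (T.nrm 0).2 * hK20 - (A2 * ((T.a 2).1 - (T.a 1).1) ^ 2 + B2 * (((T.a 2).1 - (T.a 1).1) * ((T.a 2).2 - (T.a 1).2)) + C2 * ((T.a 2).2 - (T.a 1).2) ^ 2) * hn 0
    have hH11 : (A1 * ((T.a 0).1 - (T.a 2).1) ^ 2 + B1 * (((T.a 0).1 - (T.a 2).1) * ((T.a 0).2 - (T.a 2).2)) + C1 * ((T.a 0).2 - (T.a 2).2) ^ 2) + c1 * (T.tang 1).1 = 0 := by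
      rw [htg1 1, hc1]
      linear_combination (T.nrm 1).1 * hK21 - (A1 * ((T.a 0).1 - (T.a 2).1) ^ 2 + B1 * (((T.a 0).1 - (T.a 2).1) * ((T.a 0).2 - (T.a 2).2)) + C1 * ((T.a 0).2 - (T.a 2).2) ^ 2) * hn 1
    have hH21 : (A2 * ((T.a 0).1 - (T.a 2).1) ^ 2 + B2 * (((T.a 0).1 - (T.a 2).1) * ((T.a 0).2 - (T.a 2).2)) + C2 * ((T.a 0).2 - (T.a 2).2) ^ 2) + c1 * (T.tang 1).2 = 0 := by
      rw [htg2 1, hc1]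
      linear_combination (T.nrm 1).2 * hK21 - (A2 * ((T.a 0).1 - (T.a 2).1) ^ 2 + B2 * (((T.a 0).1 - (T.a 2).1) * ((T.a 0).2 - (T.a 2).2)) + C2 * ((T.a 0).2 - (T.a 2).2) ^ 2) * hn 1
    have hH12 : (A1 * ((T.a 1).1 - (T.a 0).1) ^ 2 + B1 * (((T.a 1).1 - (T.a 0).1) * ((T.a 1).2 - (T.a 0).2)) + C1 * ((T.a 1).2 - (T.a 0).2) ^ 2) + c2 * (T.tang 2).1 = 0 := by
      rw [htg1 2, hc2]
      linear_combination (T.nrm 2).1 * hK22 - (A1 * ((T.a 1).1 - (T.a 0).1) ^ 2 + B1 * (((T.a 1).1 - (T.a 0).1) * ((T.a 1).2 - (T.a 0).2)) + C1 * ((T.a 1).2 - (T.a 0).2) ^ 2) * hn 2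
    have hH22 : (A2 * ((T.a 1).1 - (T.a 0).1) ^ 2 + B2 * (((T.a 1).1 - (T.a 0).1) * ((T.a 1).2 - (T.a 0).2)) + C2 * ((T.a 1).2 - (T.a 0).2) ^ 2) + c2 * (T.tang 2).2 = 0 := by
      rw [htg2 2, hc2]
      linear_combination (T.nrm 2).2 * hK22 - (A2 * ((T.a 1).1 - (T.a 0).1) ^ 2 + B2 * (((T.a 1).1 - (T.a 0).1) * ((T.a 1).2 - (T.a 0).2)) + C2 * ((T.a 1).2 - (T.a 0).2) ^ 2) * hn 2
    have hLV00 : lamP 0 * ((T.a 2).1 - (T.a 1).1) + lamQ 0 * ((T.a 2).2 - (T.a 1).2) = 0 := by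
      linear_combination hLA02 - hLA01
    have hLV10 : lamP 1 * ((T.a 2).1 - (T.a 1).1) + lamQ 1 * ((T.a 2).2 - (T.a 1).2) = -1 := by
      linear_combination hLA12 - hLA11
    have hLV20 : lamP 2 * ((T.a 2).1 - (T.a 1).1) + lamQ 2 * ((T.a 2).2 - (T.a 1).2) = 1 := by
      linear_combination hLA22 - hLA21
    have hLV01 : lamP 0 * ((T.a 0).1 - (T.a 2).1) + lamQ 0 * ((T.a 0).2 - (T.a 2).2) = 1 := by
      linear_combination hLA00 - hLA02
    have hLV11 : lamP 1 * ((T.a 0).1 - (T.a 2).1) + lamQ 1 * ((T.a 0).2 - (T.a 2).2) = 0 := by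
      linear_combination hLA10 - hLA12
    have hLV21 : lamP 2 * ((T.a 0).1 - (T.a 2).1) + lamQ 2 * ((T.a 0).2 - (T.a 2).2) = -1 := by
      linear_combination hLA20 - hLA22
    have hLV02 : lamP 0 * ((T.a 1).1 - (T.a 0).1) + lamQ 0 * ((T.a 1).2 - (T.a 0).2) = -1 := by
      linear_combination hLA01 - hLA00
    have hLV12 : lamP 1 * ((T.a 1).1 - (T.a 0).1) + lamQ 1 * ((T.a 1).2 - (T.a 0).2) = 1 := by
      linear_combination hLA11 - hLA10
    have hLV22 : lamP 2 * ((T.a 1).1 - (T.a 0).1) + lamQ 2 * ((T.a 1).2 - (T.a 0).2) = 0 := by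
      linear_combination hLA21 - hLA20
    have hE10 : (A1 - (c0 * (lamP 1 * lamP 2) * (T.tang 0).1 + c1 * (lamP 2 * lamP 0) * (T.tang 1).1 + c2 * (lamP 0 * lamP 1) * (T.tang 2).1)) * ((T.a 2).1 - (T.a 1).1) ^ 2 + (B1 - (c0 * (lamP 1 * lamQ 2 + lamQ 1 * lamP 2) * (T.tang 0).1 + c1 * (lamP 2 * lamQ 0 + lamQ 2 * lamP 0) * (T.tang 1).1 + c2 * (lamP 0 * lamQ 1 + lamQ 0 * lamP 1) * (T.tang 2).1)) * (((T.a 2).1 - (T.a 1).1) * ((T.a 2).2 - (T.a 1).2)) + (C1 - (c0 * (lamQ 1 * lamQ 2) * (T.tang 0).1 + c1 * (lamQ 2 * lamQ 0) * (T.tang 1).1 + c2 * (lamQ 0 * lamQ 1) * (T.tang 2).1)) * ((T.a 2).2 - (T.a 1).2) ^ 2 = 0 := by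
      linear_combination hH10 - (c0 * (T.tang 0).1) * prod_subst hLV10 hLV20 - (c1 * (T.tang 1).1) * prod_subst hLV20 hLV00 - (c2 * (T.tang 2).1) * prod_subst hLV00 hLV10
    have hE11 : (A1 - (c0 * (lamP 1 * lamP 2) * (T.tang 0).1 + c1 * (lamP 2 * lamP 0) * (T.tang 1).1 + c2 * (lamP 0 * lamP 1) * (T.tang 2).1)) * ((T.a 0).1 - (T.a 2).1) ^ 2 + (B1 - (c0 * (lamP 1 * lamQ 2 + lamQ 1 * lamP 2) * (T.tang 0).1 + c1 * (lamP 2 * lamQ 0 + lamQ 2 * lamP 0) * (T.tang 1).1 + c2 * (lamP 0 * lamQ 1 + lamQ 0 * lamP 1) * (T.tang 2).1)) * (((T.a 0).1 - (T.a 2).1) * ((T.a 0).2 - (T.a 2).2)) + (C1 - (c0 * (lamQ 1 * lamQ 2) * (T.tang 0).1 + c1 * (lamQ 2 * lamQ 0) * (T.tang 1).1 + c2 * (lamQ 0 * lamQ 1) * (T.tang 2).1)) * ((T.a 0).2 - (T.a 2).2) ^ 2 = 0 := by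
      linear_combination hH11 - (c0 * (T.tang 0).1) * prod_subst hLV11 hLV21 - (c1 * (T.tang 1).1) * prod_subst hLV21 hLV01 - (c2 * (T.tang 2).1) * prod_subst hLV01 hLV11
    have hE12 : (A1 - (c0 * (lamP 1 * lamP 2) * (T.tang 0).1 + c1 * (lamP 2 * lamP 0) * (T.tang 1).1 + c2 * (lamP 0 * lamP 1) * (T.tang 2).1)) * ((T.a 1).1 - (T.a 0).1) ^ 2 + (B1 - (c0 * (lamP 1 * lamQ 2 + lamQ 1 * lamP 2) * (T.tang 0).1 + c1 * (lamP 2 * lamQ 0 + lamQ 2 * lamP 0) * (T.tang 1).1 + c2 * (lamP 0 * lamQ 1 + lamQ 0 * lamP 1) * (T.tang 2).1)) * (((T.a 1).1 - (T.a 0).1) * ((T.a 1).2 - (T.a 0).2)) + (C1 - (c0 * (lamQ 1 * lamQ 2) * (T.tang 0).1 + c1 * (lamQ 2 * lamQ 0) * (T.tang 1).1 + c2 * (lamQ 0 * lamQ 1) * (T.tang 2).1)) * ((T.a 1).2 - (T.a 0).2) ^ 2 = 0 := by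
      linear_combination hH12 - (c0 * (T.tang 0).1) * prod_subst hLV12 hLV22 - (c1 * (T.tang 1).1) * prod_subst hLV22 hLV02 - (c2 * (T.tang 2).1) * prod_subst hLV02 hLV12
    have hE20 : (A2 - (c0 * (lamP 1 * lamP 2) * (T.tang 0).2 + c1 * (lamP 2 * lamP 0) * (T.tang 1).2 + c2 * (lamP 0 * lamP 1) * (T.tang 2).2)) * ((T.a 2).1 - (T.a 1).1) ^ 2 + (B2 - (c0 * (lamP 1 * lamQ 2 + lamQ 1 * lamP 2) * (T.tang 0).2 + c1 * (lamP 2 * lamQ 0 + lamQ 2 * lamP 0) * (T.tang 1).2 + c2 * (lamP 0 * lamQ 1 + lamQ 0 * lamP 1) * (T.tang 2).2)) * (((T.a 2).1 - (T.a 1).1) * ((T.a 2).2 - (T.a 1).2)) + (C2 - (c0 * (lamQ 1 * lamQ 2) * (T.tang 0).2 + c1 * (lamQ 2 * lamQ 0) * (T.tang 1).2 + c2 * (lamQ 0 * lamQ 1) * (T.tang 2).2)) * ((T.a 2).2 - (T.a 1).2) ^ 2 = 0 := by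
      linear_combination hH20 - (c0 * (T.tang 0).2) * prod_subst hLV10 hLV20 - (c1 * (T.tang 1).2) * prod_subst hLV20 hLV00 - (c2 * (T.tang 2).2) * prod_subst hLV00 hLV10
    have hE21 : (A2 - (c0 * (lamP 1 * lamP 2) * (T.tang 0).2 + c1 * (lamP 2 * lamP 0) * (T.tang 1).2 + c2 * (lamP 0 * lamP 1) * (T.tang 2).2)) * ((T.a 0).1 - (T.a 2).1) ^ 2 + (B2 - (c0 * (lamP 1 * lamQ 2 + lamQ 1 * lamP 2) * (T.tang 0).2 + c1 * (lamP 2 * lamQ 0 + lamQ 2 * lamP 0) * (T.tang 1).2 + c2 * (lamP 0 * lamQ 1 + lamQ 0 * lamP 1) * (T.tang 2).2)) * (((T.a 0).1 - (T.a 2).1) * ((T.a 0).2 - (T.a 2).2)) + (C2 - (c0 * (lamQ 1 * lamQ 2) * (T.tang 0).2 + c1 * (lamQ 2 * lamQ 0) * (T.tang 1).2 + c2 * (lamQ 0 * lamQ 1) * (T.tang 2).2)) * ((T.a 0).2 - (T.a 2).2) ^ 2 = 0 := by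
      linear_combination hH21 - (c0 * (T.tang 0).2) * prod_subst hLV11 hLV21 - (c1 * (T.tang 1).2) * prod_subst hLV21 hLV01 - (c2 * (T.tang 2).2) * prod_subst hLV01 hLV11
    have hE22 : (A2 - (c0 * (lamP 1 * lamP 2) * (T.tang 0).2 + c1 * (lamP 2 * lamP 0) * (T.tang 1).2 + c2 * (lamP 0 * lamP 1) * (T.tang 2).2)) * ((T.a 1).1 - (T.a 0).1) ^ 2 + (B2 - (c0 * (lamP 1 * lamQ 2 + lamQ 1 * lamP 2) * (T.tang 0).2 + c1 * (lamP 2 * lamQ 0 + lamQ 2 * lamP 0) * (T.tang 1).2 + c2 * (lamP 0 * lamQ 1 + lamQ 0 * lamP 1) * (T.tang 2).2)) * (((T.a 1).1 - (T.a 0).1) * ((T.a 1).2 - (T.a 0).2)) + (C2 - (c0 * (lamQ 1 * lamQ 2) * (T.tang 0).2 + c1 * (lamQ 2 * lamQ 0) * (T.tang 1).2 + c2 * (lamQ 0 * lamQ 1) * (T.tang 2).2)) * ((T.a 1).2 - (T.a 0).2) ^ 2 = 0 := by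
      linear_combination hH22 - (c0 * (T.tang 0).2) * prod_subst hLV12 hLV22 - (c1 * (T.tang 1).2) * prod_subst hLV22 hLV02 - (c2 * (T.tang 2).2) * prod_subst hLV02 hLV12
    have hEs1 : (A1 - (c0 * (lamP 1 * lamP 2) * (T.tang 0).1 + c1 * (lamP 2 * lamP 0) * (T.tang 1).1 + c2 * (lamP 0 * lamP 1) * (T.tang 2).1)) * (((T.a 1).1 - (T.a 0).1) + ((T.a 2).1 - (T.a 1).1)) ^ 2 + (B1 - (c0 * (lamP 1 * lamQ 2 + lamQ 1 * lamP 2) * (T.tang 0).1 + c1 * (lamP 2 * lamQ 0 + lamQ 2 * lamP 0) * (T.tang 1).1 + c2 * (lamP 0 * lamQ 1 + lamQ 0 * lamP 1) * (T.tang 2).1)) * ((((T.a 1).1 - (T.a 0).1) + ((T.a 2).1 - (T.a 1).1)) * (((T.a 1).2 - (T.a 0).2) + ((T.a 2).2 - (T.a 1).2))) + (C1 - (c0 * (lamQ 1 * lamQ 2) * (T.tang 0).1 + c1 * (lamQ 2 * lamQ 0) * (T.tang 1).1 + c2 * (lamQ 0 * lamQ 1) * (T.tang 2).1)) * (((T.a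 1).2 - (T.a 0).2) + ((T.a 2).2 - (T.a 1).2)) ^ 2 = 0 := by
      linear_combination hE11
    have hEs2 : (A2 - (c0 * (lamP 1 * lamP 2) * (T.tang 0).2 + c1 * (lamP 2 * lamP 0) * (T.tang 1).2 + c2 * (lamP 0 * lamP 1) * (T.tang 2).2)) * (((T.a 1).1 - (T.a 0).1) + ((T.a 2).1 - (T.a 1).1)) ^ 2 + (B2 - (c0 * (lamP 1 * lamQ 2 + lamQ 1 * lamP 2) * (T.tang 0).2 + c1 * (lamP 2 * lamQ 0 + lamQ 2 * lamP 0) * (T.tang 1).2 + c2 * (lamP 0 * lamQ 1 + lamQ 0 * lamP 1) * (T.tang 2).2)) * ((((T.a 1).1 - (T.a 0).1) + ((T.a 2).1 - (T.a 1).1)) * (((T.a 1).2 - (T.a 0).2) + ((T.a 2).2 - (T.a 1).2))) + (C2 - (c0 * (lamQ 1 * lamQ 2) * (T.tang 0).2 + c1 * (lamQ 2 * lamQ 0) * (T.tang 1).2 + c2 * (lamQ 0 * lamQ 1) * (T.tang 2).2)) * (((T.a 1).2 - (T.a 0).2) + ((T.a 2).2 - (T.a 1).2)) ^ 2 = 0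 := by
      linear_combination hE21
    have hD' : ((T.a 1).1 - (T.a 0).1) * ((T.a 2).2 - (T.a 1).2) - ((T.a 2).1 - (T.a 1).1) * ((T.a 1).2 - (T.a 0).2) ≠ 0 := fun h => hD (by linear_combination h)
    obtain ⟨hZa1, hZb1, hZc1⟩ := quadform_zero hD' hE12 hE10 hEs1
    obtain ⟨hZa2, hZb2, hZc2⟩ := quadform_zero hD' hE22 hE20 hEs2
    set CC : Fin 3 → ℝ := fun k => if k = 0 then c0 else if k = 1 then c1 else c2 with hCCdef
    have hCC0 : CC 0 = c0 := by simp [hCCdef]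
    have hCC1 : CC 1 = c1 := by simp [hCCdef]
    have hCC2 : CC 2 = c2 := by simp [hCCdef]
    set pp : V2 → V2 := fun x => v x - ∑ k : Fin 3, (CC k * (T.lam (k+1) x * T.lam (k+2) x)) • T.tang k with hppdef
    have hpp1 : ∀ x : V2, (pp x).1 = (v x).1 - (CC 0 * (T.lam 1 x * T.lam 2 x) * (T.tang 0).1 + CC 1 * (T.lam 2 x * T.lam 0 x) * (T.tang 1).1 + CC 2 * (T.lam 0 x * T.lam 1 x) * (T.tang 2).1) := by
      intro x
      rw [hppdef]
      simp only [Prod.fst_sub, Fin.sum_univ_three, Prod.fst_add, Prod.smul_fst, smul_eq_mul, Fin.isValue, Fin.reduceAdd]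
    have hpp2 : ∀ x : V2, (pp x).2 = (v x).2 - (CC 0 * (T.lam 1 x * T.lam 2 x) * (T.tang 0).2 + CC 1 * (T.lam 2 x * T.lam 0 x) * (T.tang 1).2 + CC 2 * (T.lam 0 x * T.lam 1 x) * (T.tang 2).2) := by
      intro x
      rw [hppdef]
      simp only [Prod.snd_sub, Fin.sum_univ_three, Prod.snd_add, Prod.smul_snd, smul_eq_mul, Fin.isValue, Fin.reduceAdd]
    have hprop : IsVPolyDeg 1 pp ∧ ∀ x : V2, v x = pp x + ∑ k : Fin 3, (CC k * (T.lam (k + 1) x * T.lam (k + 2) x)) • T.tang k := by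
      constructor
      · constructor
        · rw [isPolyDeg_one_iff]
          refine ⟨D1 - (c0 * (lamP 1 * con 2 + con 1 * lamP 2) * (T.tang 0).1 + c1 * (lamP 2 * con 0 + con 2 * lamP 0) * (T.tang 1).1 + c2 * (lamP 0 * con 1 + con 0 * lamP 1) * (T.tang 2).1), E1 - (c0 * (lamQ 1 * con 2 + con 1 * lamQ 2) * (T.tang 0).1 + c1 * (lamQ 2 * con 0 + con 2 * lamQ 0) * (T.tang 1).1 + c2 * (lamQ 0 * con 1 + con 0 * lamQ 1) * (T.tang 2).1), F1 - (c0 * (con 1 * con 2) * (T.tang 0).1 + c1 * (con 2 * con 0) * (T.tang 1).1 + c2 * (con 0 * con 1) * (T.tang 2).1), fun x => ?_⟩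
          show (pp x).1 = _
          rw [hpp1 x, hv1 x, hCC0, hCC1, hCC2]
          simp only [hlam]
          linear_combination x.1 ^ 2 * hZa1 + (x.1 * x.2) * hZb1 + x.2 ^ 2 * hZc1
        · rw [isPolyDeg_one_iff]
          refine ⟨D2 - (c0 * (lamP 1 * con 2 + con 1 * lamP 2) * (T.tang 0).2 + c1 * (lamP 2 * con 0 + con 2 * lamP 0) * (T.tang 1).2 + c2 * (lamP 0 * con 1 + con 0 * lamP 1) * (T.tang 2).2), E2 - (c0 * (lamQ 1 * con 2 + con 1 * lamQ 2) * (T.tang 0).2 + c1 * (lamQ 2 * con 0 + con 2 * lamQ 0) * (T.tang 1).2 + c2 * (lamQ 0 * con 1 + con 0 * lamQ 1) * (T.tang 2).2), F2 - (c0 * (con 1 * con 2) * (T.tang 0).2 + c1 * (con 2 * con 0) * (T.tang 1).2 + c2 * (con 0 * con 1) * (T.tang 2).2), fun x => ?_⟩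
          show (pp x).2 = _
          rw [hpp2 x, hv2 x, hCC0, hCC1, hCC2]
          simp only [hlam]
          linear_combination x.1 ^ 2 * hZa2 + (x.1 * x.2) * hZb2 + x.2 ^ 2 * hZc2
      · intro x
        rw [hppdef]
        exact (sub_add_cancel _ _).symm
    refine ⟨(pp, CC), hprop, fun y hy => ?_⟩
    obtain ⟨hy1, hy2⟩ := hy
    obtain ⟨hfe, hce⟩ := huniq y.1 pp y.2 CC hy1 hprop.1 (fun x => (hy2 x).symm.trans (hprop.2 x))
    exact Prod.ext hfe hce
  · -- backward direction
    rintro ⟨⟨p, cc⟩, ⟨⟨hq1, hq2⟩, heq⟩, -⟩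
    rw [isPolyDeg_one_iff] at hq1 hq2
    obtain ⟨d1, e1, f1, hp1⟩ := hq1
    obtain ⟨d2, e2, f2, hp2⟩ := hq2
    have hp1 : ∀ x : V2, (p x).1 = d1 * x.1 + e1 * x.2 + f1 := hp1
    have hp2 : ∀ x : V2, (p x).2 = d2 * x.1 + e2 * x.2 + f2 := hp2
    have hv1 : ∀ x : V2, (v x).1 = (d1 * x.1 + e1 * x.2 + f1)
        + (cc 0 * (T.lam 1 x * T.lam 2 x) * (T.tang 0).1
          + cc 1 * (T.lam 2 x * T.lam 0 x) * (T.tang 1).1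
          + cc 2 * (T.lam 0 x * T.lam 1 x) * (T.tang 2).1) := by
      intro x
      rw [heq x]
      simp only [Fin.sum_univ_three, Prod.fst_add, Prod.smul_fst, smul_eq_mul,
        Fin.isValue, Fin.reduceAdd]
      rw [hp1]
    have hv2 : ∀ x : V2, (v x).2 = (d2 * x.1 + e2 * x.2 + f2)
        + (cc 0 * (T.lam 1 x * T.lam 2 x) * (T.tang 0).2
          + cc 1 * (T.lam 2 x * T.lam 0 x) * (T.tang 1).2
          + cc 2 * (T.lam 0 x * T.lam 1 x) * (T.tang 2).2) := by
      intro x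
      rw [heq x]
      simp only [Fin.sum_univ_three, Prod.snd_add, Prod.smul_snd, smul_eq_mul,
        Fin.isValue, Fin.reduceAdd]
      rw [hp2]
    constructor
    · constructor
      · rw [isPolyDeg_two_iff]
        refine ⟨cc 0 * (lamP 1 * lamP 2) * (T.tang 0).1 + cc 1 * (lamP 2 * lamP 0) * (T.tang 1).1
            + cc 2 * (lamP 0 * lamP 1) * (T.tang 2).1,
          cc 0 * (lamP 1 * lamQ 2 + lamQ 1 * lamP 2) * (T.tang 0).1
            + cc 1 * (lamP 2 * lamQ 0 + lamQ 2 * lamP 0) * (T.tang 1).1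
            + cc 2 * (lamP 0 * lamQ 1 + lamQ 0 * lamP 1) * (T.tang 2).1,
          cc 0 * (lamQ 1 * lamQ 2) * (T.tang 0).1 + cc 1 * (lamQ 2 * lamQ 0) * (T.tang 1).1
            + cc 2 * (lamQ 0 * lamQ 1) * (T.tang 2).1,
          d1 + cc 0 * (lamP 1 * con 2 + con 1 * lamP 2) * (T.tang 0).1
            + cc 1 * (lamP 2 * con 0 + con 2 * lamP 0) * (T.tang 1).1
            + cc 2 * (lamP 0 * con 1 + con 0 * lamP 1) * (T.tang 2).1,
          e1 + cc 0 * (lamQ 1 * con 2 + con 1 * lamQ 2) * (T.tang 0).1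
            + cc 1 * (lamQ 2 * con 0 + con 2 * lamQ 0) * (T.tang 1).1
            + cc 2 * (lamQ 0 * con 1 + con 0 * lamQ 1) * (T.tang 2).1,
          f1 + cc 0 * (con 1 * con 2) * (T.tang 0).1 + cc 1 * (con 2 * con 0) * (T.tang 1).1
            + cc 2 * (con 0 * con 1) * (T.tang 2).1,
          fun x => ?_⟩
        show (v x).1 = _
        rw [hv1 x]
        simp only [hlam]
        ring
      · rw [isPolyDeg_two_iff]
        refine ⟨cc 0 * (lamP 1 * lamP 2) * (T.tang 0).2 + cc 1 * (lamP 2 * lamP 0) * (T.tang 1).2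
            + cc 2 * (lamP 0 * lamP 1) * (T.tang 2).2,
          cc 0 * (lamP 1 * lamQ 2 + lamQ 1 * lamP 2) * (T.tang 0).2
            + cc 1 * (lamP 2 * lamQ 0 + lamQ 2 * lamP 0) * (T.tang 1).2
            + cc 2 * (lamP 0 * lamQ 1 + lamQ 0 * lamP 1) * (T.tang 2).2,
          cc 0 * (lamQ 1 * lamQ 2) * (T.tang 0).2 + cc 1 * (lamQ 2 * lamQ 0) * (T.tang 1).2
            + cc 2 * (lamQ 0 * lamQ 1) * (T.tang 2).2,
          d2 + cc 0 * (lamP 1 * con 2 + con 1 * lamP 2) * (T.tang 0).2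
            + cc 1 * (lamP 2 * con 0 + con 2 * lamP 0) * (T.tang 1).2
            + cc 2 * (lamP 0 * con 1 + con 0 * lamP 1) * (T.tang 2).2,
          e2 + cc 0 * (lamQ 1 * con 2 + con 1 * lamQ 2) * (T.tang 0).2
            + cc 1 * (lamQ 2 * con 0 + con 2 * lamQ 0) * (T.tang 1).2
            + cc 2 * (lamQ 0 * con 1 + con 0 * lamQ 1) * (T.tang 2).2,
          f2 + cc 0 * (con 1 * con 2) * (T.tang 0).2 + cc 1 * (con 2 * con 0) * (T.tang 1).2
            + cc 2 * (con 0 * con 1) * (T.tang 2).2,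
          fun x => ?_⟩
        show (v x).2 = _
        rw [hv2 x]
        simp only [hlam]
        ring
    · -- NormalP1
      intro i
      refine ⟨(d1 * (T.a (i+1)).1 + e1 * (T.a (i+1)).2 + f1) * (T.nrm i).1
          + (d2 * (T.a (i+1)).1 + e2 * (T.a (i+1)).2 + f2) * (T.nrm i).2,
        (d1 * ((T.a (i+2)).1 - (T.a (i+1)).1) + e1 * ((T.a (i+2)).2 - (T.a (i+1)).2)) * (T.nrm i).1
          + (d2 * ((T.a (i+2)).1 - (T.a (i+1)).1) + e2 * ((T.a (i+2)).2 - (T.a (i+1)).2)) * (T.nrm i).2,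
        fun s hs => ?_⟩
      have hx1 : (epara T i s).1 = (T.a (i+1)).1 + s * ((T.a (i+2)).1 - (T.a (i+1)).1) := by
        simp [epara, seg]
      have hx2 : (epara T i s).2 = (T.a (i+1)).2 + s * ((T.a (i+2)).2 - (T.a (i+1)).2) := by
        simp [epara, seg]
      have horth : (T.nrm i).1 * (T.tang i).1 + (T.nrm i).2 * (T.tang i).2 = 0 := T.nrm_orth i
      rw [dot2, heq (epara T i s), hbub cc i s]
      simp only [Prod.fst_add, Prod.snd_add, Prod.smul_fst, Prod.smul_snd, smul_eq_mul]
      rw [hp1, hp2, hx1, hx2]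
      linear_combination (cc i * ((1-s) * s)) * horth
end
end

section
/- On a non-degenerate triangle T, the space P^{1+}(T) := P1(T)^2 ⊕ span{curl(λ1 λ2 λ3)} equals the subspace of P^{2-}(T) consisting of those vector fields whose divergence is constant on T, where P^{2-}(T) = {v ∈ P2(T)^2 : v·n|_{e_i} ∈ P1(e_i), i=1,2,3}. -/
open MeasureTheory
open scoped Classical

noncomputable section

open MvPolynomial in
lemma coeffs_of_isPolyDeg2 {f : V2 → ℝ} (hf : IsPolyDeg 2 f) :
    ∃ a b c d e g : ℝ, ∀ x : V2,
      f x = a + b*x.1 + c*x.2 + d*x.1^2 + e*(x.1*x.2) + g*x.2^2 := by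
  classical
  obtain ⟨p, hdeg, hev⟩ := hf
  set m : ℕ → ℕ → (Fin 2 →₀ ℕ) := fun i j => Finsupp.single 0 i + Finsupp.single 1 j with hm
  have hm0 : ∀ i j, m i j 0 = i := by intro i j; simp [hm, Finsupp.single_apply]
  have hm1 : ∀ i j, m i j 1 = j := by intro i j; simp [hm, Finsupp.single_apply]
  have hminj : ∀ {i j k l : ℕ}, m i j = m k l → i = k ∧ j = l := by
    intro i j k l h
    have h0 := congrArg (fun z => z 0) h
    have h1 := congrArg (fun z => z 1) h
    simp only [hm0, hm1] at h0 h1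
    exact ⟨h0, h1⟩
  have hne : ∀ {i j k l : ℕ}, (i, j) ≠ (k, l) → m i j ≠ m k l := by
    intro i j k l h hmm
    exact h (by obtain ⟨h1, h2⟩ := hminj hmm; simp [h1, h2])
  set TT : Finset (Fin 2 →₀ ℕ) := {m 0 0, m 1 0, m 0 1, m 2 0, m 1 1, m 0 2} with hTT
  refine ⟨coeff (m 0 0) p, coeff (m 1 0) p, coeff (m 0 1) p, coeff (m 2 0) p,
    coeff (m 1 1) p, coeff (m 0 2) p, ?_⟩
  intro x
  rw [hev x, eval_eq']
  have hsub : p.support ⊆ TT := by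
    intro d hd
    have hle : (d.sum fun _ n => n) ≤ p.totalDegree := le_totalDegree hd
    have hsum : (d.sum fun _ n => n) = d 0 + d 1 := by
      rw [Finsupp.sum_fintype]
      · simp [Fin.sum_univ_two]
      · intro i; rfl
    have h2 : d 0 + d 1 ≤ 2 := le_trans (le_of_eq hsum.symm) (le_trans hle hdeg)
    have hd' : d = m (d 0) (d 1) := by
      refine Finsupp.ext fun i => ?_
      fin_cases i <;> simp [hm0, hm1]
    obtain ⟨i0, i1, hle2, hdm⟩ : ∃ i0 i1, i0 + i1 ≤ 2 ∧ d = m i0 i1 := ⟨d 0, d 1, h2, hd'⟩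
    rw [hdm, hTT]
    simp only [Finset.mem_insert, Finset.mem_singleton]
    have h0 : i0 ≤ 2 := by omega
    have h1 : i1 ≤ 2 := by omega
    interval_cases i0 <;> interval_cases i1 <;> first | simp | omega
  rw [Finset.sum_subset hsub (by
    intro d _ hd
    rw [MvPolynomial.notMem_support_iff.mp hd, zero_mul])]
  have hni1 : m 0 0 ∉ ({m 1 0, m 0 1, m 2 0, m 1 1, m 0 2} : Finset (Fin 2 →₀ ℕ)) := by
    simp only [Finset.mem_insert, Finset.mem_singleton]
    push_neg
    exact ⟨hne (by decide), hne (by decide), hne (by decide), hne (by decide), hne (by decide)⟩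
  have hni2 : m 1 0 ∉ ({m 0 1, m 2 0, m 1 1, m 0 2} : Finset (Fin 2 →₀ ℕ)) := by
    simp only [Finset.mem_insert, Finset.mem_singleton]
    push_neg
    exact ⟨hne (by decide), hne (by decide), hne (by decide), hne (by decide)⟩
  have hni3 : m 0 1 ∉ ({m 2 0, m 1 1, m 0 2} : Finset (Fin 2 →₀ ℕ)) := by
    simp only [Finset.mem_insert, Finset.mem_singleton]
    push_neg
    exact ⟨hne (by decide), hne (by decide), hne (by decide)⟩
  have hni4 : m 2 0 ∉ ({m 1 1, m 0 2} : Finset (Fin 2 →₀ ℕ)) := by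
    simp only [Finset.mem_insert, Finset.mem_singleton]
    push_neg
    exact ⟨hne (by decide), hne (by decide)⟩
  have hni5 : m 1 1 ∉ ({m 0 2} : Finset (Fin 2 →₀ ℕ)) := by
    simp only [Finset.mem_singleton]
    exact hne (by decide)
  rw [hTT, Finset.sum_insert hni1, Finset.sum_insert hni2, Finset.sum_insert hni3,
    Finset.sum_insert hni4, Finset.sum_insert hni5, Finset.sum_singleton]
  simp only [Fin.prod_univ_two, hm0, hm1]
  norm_num
  ring

open MvPolynomial in
lemma monomial_deg_le (r : ℝ) (i j : ℕ) :
    (C r * X (0:Fin 2) ^ i * X 1 ^ j : MvPolynomial (Fin 2) ℝ).totalDegree ≤ i + j := by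
  calc (C r * X (0:Fin 2) ^ i * X 1 ^ j).totalDegree
      ≤ (C r * X (0:Fin 2) ^ i).totalDegree + (X (1:Fin 2) ^ j : MvPolynomial (Fin 2) ℝ).totalDegree :=
        totalDegree_mul _ _
    _ ≤ ((C r : MvPolynomial (Fin 2) ℝ).totalDegree + (X (0:Fin 2) ^ i : MvPolynomial (Fin 2) ℝ).totalDegree)
          + (X (1:Fin 2) ^ j : MvPolynomial (Fin 2) ℝ).totalDegree := Nat.add_le_add_right (totalDegree_mul _ _) _
    _ ≤ i + j := by
        have h1 := totalDegree_pow (X (0:Fin 2) : MvPolynomial (Fin 2) ℝ) i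
        have h2 := totalDegree_pow (X (1:Fin 2) : MvPolynomial (Fin 2) ℝ) j
        simp only [totalDegree_X, totalDegree_C, mul_one] at h1 h2 ⊢
        omega

open MvPolynomial in
lemma isPolyDeg_quad (a b c d e g : ℝ) :
    IsPolyDeg 2 (fun x : V2 => a + b*x.1 + c*x.2 + d*x.1^2 + e*(x.1*x.2) + g*x.2^2) := by
  refine ⟨C a * X 0 ^ 0 * X 1 ^ 0 + C b * X 0 ^ 1 * X 1 ^ 0 + C c * X 0 ^ 0 * X 1 ^ 1
    + C d * X 0 ^ 2 * X 1 ^ 0 + C e * X 0 ^ 1 * X 1 ^ 1 + C g * X 0 ^ 0 * X 1 ^ 2, ?_, ?_⟩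
  · have step : ∀ p q : MvPolynomial (Fin 2) ℝ, p.totalDegree ≤ 2 → q.totalDegree ≤ 2 →
        (p+q).totalDegree ≤ 2 := fun p q hp hq => le_trans (totalDegree_add p q) (max_le hp hq)
    refine step _ _ (step _ _ (step _ _ (step _ _ (step _ _ ?_ ?_) ?_) ?_) ?_) ?_ <;>
      exact le_trans (monomial_deg_le _ _ _) (by norm_num)
  · intro x; simp; try ring

open MvPolynomial in
lemma isPolyDeg_lin (a b c : ℝ) :
    IsPolyDeg 1 (fun x : V2 => a + b*x.1 + c*x.2) := by
  refine ⟨C a * X 0 ^ 0 * X 1 ^ 0 + C b * X 0 ^ 1 * X 1 ^ 0 + C c * X 0 ^ 0 * X 1 ^ 1, ?_, ?_⟩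
  · have step : ∀ p q : MvPolynomial (Fin 2) ℝ, p.totalDegree ≤ 1 → q.totalDegree ≤ 1 →
        (p+q).totalDegree ≤ 1 := fun p q hp hq => le_trans (totalDegree_add p q) (max_le hp hq)
    refine step _ _ (step _ _ ?_ ?_) ?_ <;>
      exact le_trans (monomial_deg_le _ _ _) (by norm_num)
  · intro x; simp; try ring

lemma isPolyDeg_congr {k : ℕ} {f g : V2 → ℝ} (h : ∀ x, f x = g x) (hg : IsPolyDeg k g) :
    IsPolyDeg k f := by
  obtain ⟨p, h1, h2⟩ := hg
  exact ⟨p, h1, fun x => (h x).trans (h2 x)⟩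

lemma pd1_congr {f g : V2 → ℝ} (h : ∀ x, f x = g x) (x : V2) : pd1 f x = pd1 g x := by
  have : f = g := funext h
  rw [pd1, pd1, this]

lemma pd2_congr {f g : V2 → ℝ} (h : ∀ x, f x = g x) (x : V2) : pd2 f x = pd2 g x := by
  have : f = g := funext h
  rw [pd2, pd2, this]

lemma pd_cubic (a0 a1 a2 a3 a4 a5 a6 a7 a8 a9 : ℝ) (x : V2) :
    pd1 (fun v : V2 => a0 + a1 * v.1 + a2 * v.2 + a3 * (v.1*v.1) + a4 * (v.1*v.2)
        + a5 * (v.2*v.2) + a6 * (v.1*v.1*v.1) + a7 * (v.1*v.1*v.2) + a8 * (v.1*v.2*v.2)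
        + a9 * (v.2*v.2*v.2)) x
      = a1 + 2*a3*x.1 + a4*x.2 + 3*a6*x.1^2 + 2*a7*(x.1*x.2) + a8*x.2^2 ∧
    pd2 (fun v : V2 => a0 + a1 * v.1 + a2 * v.2 + a3 * (v.1*v.1) + a4 * (v.1*v.2)
        + a5 * (v.2*v.2) + a6 * (v.1*v.1*v.1) + a7 * (v.1*v.1*v.2) + a8 * (v.1*v.2*v.2)
        + a9 * (v.2*v.2*v.2)) x
      = a2 + a4*x.1 + 2*a5*x.2 + a7*x.1^2 + 2*a8*(x.1*x.2) + 3*a9*x.2^2 := by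
  have h1 : HasFDerivAt (fun v : V2 => v.1) (ContinuousLinearMap.fst ℝ ℝ ℝ) x := hasFDerivAt_fst
  have h2 : HasFDerivAt (fun v : V2 => v.2) (ContinuousLinearMap.snd ℝ ℝ ℝ) x := hasFDerivAt_snd
  have hD := ((((((((((hasFDerivAt_const a0 x).add (h1.const_mul a1)).add (h2.const_mul a2)).add
    ((h1.mul h1).const_mul a3)).add ((h1.mul h2).const_mul a4)).add ((h2.mul h2).const_mul a5)).add
    (((h1.mul h1).mul h1).const_mul a6)).add (((h1.mul h1).mul h2).const_mul a7)).add
    (((h1.mul h2).mul h2).const_mul a8)).add (((h2.mul h2).mul h2).const_mul a9))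
  constructor
  · rw [pd1]; erw [hD.fderiv]; simp; ring
  · rw [pd2]; erw [hD.fderiv]; simp; ring

open MvPolynomial in
lemma coeffs_of_isPolyDeg1 {f : V2 → ℝ} (hf : IsPolyDeg 1 f) :
    ∃ a b c : ℝ, ∀ x : V2, f x = a + b*x.1 + c*x.2 := by
  classical
  obtain ⟨p, hdeg, hev⟩ := hf
  set m : ℕ → ℕ → (Fin 2 →₀ ℕ) := fun i j => Finsupp.single 0 i + Finsupp.single 1 j with hm
  have hm0 : ∀ i j, m i j 0 = i := by intro i j; simp [hm, Finsupp.single_apply]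
  have hm1 : ∀ i j, m i j 1 = j := by intro i j; simp [hm, Finsupp.single_apply]
  have hminj : ∀ {i j k l : ℕ}, m i j = m k l → i = k ∧ j = l := by
    intro i j k l h
    have h0 := congrArg (fun z => z 0) h
    have h1 := congrArg (fun z => z 1) h
    simp only [hm0, hm1] at h0 h1
    exact ⟨h0, h1⟩
  have hne : ∀ {i j k l : ℕ}, (i, j) ≠ (k, l) → m i j ≠ m k l := by
    intro i j k l h hmm
    exact h (by obtain ⟨h1, h2⟩ := hminj hmm; simp [h1, h2])
  set TT : Finset (Fin 2 →₀ ℕ) := {m 0 0, m 1 0, m 0 1} with hTT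
  refine ⟨coeff (m 0 0) p, coeff (m 1 0) p, coeff (m 0 1) p, ?_⟩
  intro x
  rw [hev x, eval_eq']
  have hsub : p.support ⊆ TT := by
    intro d hd
    have hle : (d.sum fun _ n => n) ≤ p.totalDegree := le_totalDegree hd
    have hsum : (d.sum fun _ n => n) = d 0 + d 1 := by
      rw [Finsupp.sum_fintype]
      · simp [Fin.sum_univ_two]
      · intro i; rfl
    have h2 : d 0 + d 1 ≤ 1 := le_trans (le_of_eq hsum.symm) (le_trans hle hdeg)
    have hd' : d = m (d 0) (d 1) := by
      refine Finsupp.ext fun i => ?_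
      fin_cases i <;> simp [hm0, hm1]
    obtain ⟨i0, i1, hle2, hdm⟩ : ∃ i0 i1, i0 + i1 ≤ 1 ∧ d = m i0 i1 := ⟨d 0, d 1, h2, hd'⟩
    rw [hdm, hTT]
    simp only [Finset.mem_insert, Finset.mem_singleton]
    have h0 : i0 ≤ 1 := by omega
    have h1 : i1 ≤ 1 := by omega
    interval_cases i0 <;> interval_cases i1 <;> first | simp | omega
  rw [Finset.sum_subset hsub (by
    intro d _ hd
    rw [MvPolynomial.notMem_support_iff.mp hd, zero_mul])]
  have hni1 : m 0 0 ∉ ({m 1 0, m 0 1} : Finset (Fin 2 →₀ ℕ)) := by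
    simp only [Finset.mem_insert, Finset.mem_singleton]
    push_neg
    exact ⟨hne (by decide), hne (by decide)⟩
  have hni2 : m 1 0 ∉ ({m 0 1} : Finset (Fin 2 →₀ ℕ)) := by
    simp only [Finset.mem_singleton]
    exact hne (by decide)
  rw [hTT, Finset.sum_insert hni1, Finset.sum_insert hni2, Finset.sum_singleton]
  simp only [Fin.prod_univ_two, hm0, hm1]
  norm_num
  ring

lemma cross_ne_of_indep {a : Fin 3 → V2} (h : AffineIndependent ℝ a) :
    cross2 (a 1 - a 0) (a 2 - a 0) ≠ 0 := by
  intro h0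
  set u : V2 := a 1 - a 0 with hu
  set v : V2 := a 2 - a 0 with hv
  have hdep : ∃ α β : ℝ, ¬(α = 0 ∧ β = 0) ∧ α • u + β • v = 0 := by
    by_cases huz : u = 0
    · exact ⟨1, 0, by simp, by simp [huz]⟩
    · refine ⟨dot2 u v, -(dot2 u u), ?_, ?_⟩
      · rintro ⟨-, h2⟩
        have : u.1 ^ 2 + u.2 ^ 2 = 0 := by
          have := neg_eq_zero.mp h2
          simp only [dot2] at this
          nlinarith [this]
        have h1 : u.1 = 0 := by nlinarith [sq_nonneg u.1, sq_nonneg u.2]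
        have h2' : u.2 = 0 := by nlinarith [sq_nonneg u.1, sq_nonneg u.2]
        exact huz (Prod.ext h1 h2')
      · have hc : u.1 * v.2 - u.2 * v.1 = 0 := h0
        refine Prod.ext ?_ ?_ <;>
          simp only [dot2, Prod.fst_add, Prod.snd_add, Prod.smul_fst, Prod.smul_snd,
            smul_eq_mul, Prod.fst_zero, Prod.snd_zero]
        · linear_combination u.2 * hc
        · linear_combination (-u.1) * hc
  obtain ⟨α, β, hnz, hzero⟩ := hdep
  have key := affineIndependent_iff.mp h Finset.univ ![-α - β, α, β]
  have hsw : ∑ e ∈ Finset.univ, (![-α - β, α, β] : Fin 3 → ℝ) e = 0 := by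
    simp [Fin.sum_univ_three]; ring
  have hsv : ∑ e ∈ Finset.univ, (![-α - β, α, β] : Fin 3 → ℝ) e • a e = 0 := by
    have expand : ∑ e ∈ Finset.univ, (![-α - β, α, β] : Fin 3 → ℝ) e • a e
        = α • u + β • v := by
      simp only [Fin.sum_univ_three, hu, hv]
      simp only [Matrix.cons_val_zero, Matrix.cons_val_one, Matrix.head_cons,
        Matrix.cons_val_two, Matrix.tail_cons]
      refine Prod.ext ?_ ?_ <;>
        simp only [Prod.fst_add, Prod.snd_add, Prod.smul_fst, Prod.smul_snd, smul_eq_mul,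
          Prod.fst_sub, Prod.snd_sub] <;> ring
    rw [expand, hzero]
  have hα := key hsw hsv 1 (Finset.mem_univ _)
  have hβ := key hsw hsv 2 (Finset.mem_univ _)
  simp at hα hβ
  exact hnz ⟨hα, hβ⟩

lemma lam_form (T : Triangle) (i : Fin 3) :
    ∃ P Q c : ℝ, ∀ x : V2, T.lam i x = P*x.1 + Q*x.2 + c := by
  obtain ⟨L, c, h⟩ := T.lam_affine i
  refine ⟨L (1,0), L (0,1), c, fun x => ?_⟩
  have hx : (x : V2) = x.1 • ((1:ℝ),(0:ℝ)) + x.2 • ((0:ℝ),(1:ℝ)) := by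
    refine Prod.ext ?_ ?_ <;> simp
  have hL : L x = x.1 * L (1,0) + x.2 * L (0,1) := by
    conv_lhs => rw [hx]
    rw [map_add, _root_.map_smul, _root_.map_smul]
    simp [smul_eq_mul]
  rw [h, hL]
  ring

lemma key_cubic (u1 u2 g0 g1 g2 : V2) (A B C D s01 s02 s12 s21 : ℝ)
    (hδ : cross2 u1 u2 ≠ 0)
    (hs01 : dot2 g0 u1 = s01) (hs02 : dot2 g0 u2 = s02)
    (hg11 : dot2 g1 u1 = 0) (hs12 : dot2 g1 u2 = s12)
    (hs21 : dot2 g2 u1 = s21) (hg22 : dot2 g2 u2 = 0)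
    (h0sum : s01 + s02 = 0)
    (hK : s01 * s12 * s21 ≠ 0)
    (F1 : A*u1.1^3 + B*u1.1^2*u1.2 + C*u1.1*u1.2^2 + D*u1.2^3 = 0)
    (F2 : A*u2.1^3 + B*u2.1^2*u2.2 + C*u2.1*u2.2^2 + D*u2.2^3 = 0)
    (F0 : A*(u1.1+u2.1)^3 + B*(u1.1+u2.1)^2*(u1.2+u2.2) + C*(u1.1+u2.1)*(u1.2+u2.2)^2
      + D*(u1.2+u2.2)^3 = 0) :
    ∃ c : ℝ, ∀ x y : ℝ, A*x^3 + B*x^2*y + C*x*y^2 + D*y^3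
        = c * ((g0.1*x+g0.2*y) * ((g1.1*x+g1.2*y) * (g2.1*x+g2.2*y))) := by
  set K := s01 * s12 * s21 with hKdef
  set Bt := 3*A*u1.1^2*u2.1 + B*(u1.1^2*u2.2 + 2*u1.1*u1.2*u2.1)
    + C*(2*u1.1*u1.2*u2.2 + u1.2^2*u2.1) + 3*D*u1.2^2*u2.2 with hBt
  refine ⟨Bt / K, fun x y => ?_⟩
  set δ := cross2 u1 u2 with hδd
  set α := cross2 (x, y) u2 with hα
  set β := cross2 u1 (x, y) with hβ
  have hx : α*u1.1 + β*u2.1 = δ*x := by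
    simp only [hα, hβ, hδd, cross2]; ring
  have hy : α*u1.2 + β*u2.2 = δ*y := by
    simp only [hα, hβ, hδd, cross2]; ring
  have hF : δ^3 * (A*x^3 + B*x^2*y + C*x*y^2 + D*y^3) = Bt * (α^2*β - α*β^2) := by
    have e1 : δ^3 * (A*x^3 + B*x^2*y + C*x*y^2 + D*y^3)
        = A*(δ*x)^3 + B*(δ*x)^2*(δ*y) + C*(δ*x)*(δ*y)^2 + D*(δ*y)^3 := by ring
    rw [e1, ← hx, ← hy]
    linear_combination (α^3 - α*β^2) * F1 + (β^3 - α*β^2) * F2 + (α*β^2) * F0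
  have hb : δ^3 * ((g0.1*x+g0.2*y) * ((g1.1*x+g1.2*y) * (g2.1*x+g2.2*y)))
      = K * (α^2*β - α*β^2) := by
    have e2 : δ^3 * ((g0.1*x+g0.2*y) * ((g1.1*x+g1.2*y) * (g2.1*x+g2.2*y)))
        = (g0.1*(δ*x)+g0.2*(δ*y)) * ((g1.1*(δ*x)+g1.2*(δ*y)) * (g2.1*(δ*x)+g2.2*(δ*y))) := by
      ring
    rw [e2, ← hx, ← hy]
    have expand : (g0.1*(α*u1.1 + β*u2.1)+g0.2*(α*u1.2 + β*u2.2))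
          * ((g1.1*(α*u1.1 + β*u2.1)+g1.2*(α*u1.2 + β*u2.2))
          * (g2.1*(α*u1.1 + β*u2.1)+g2.2*(α*u1.2 + β*u2.2)))
        = (α*(dot2 g0 u1)+β*(dot2 g0 u2)) * ((α*(dot2 g1 u1)+β*(dot2 g1 u2))
          * (α*(dot2 g2 u1)+β*(dot2 g2 u2))) := by
      simp only [dot2]; ring
    rw [expand, hs01, hs02, hg11, hs12, hs21, hg22, hKdef]
    linear_combination (α*β^2*s12*s21) * h0sum
  have hδ3 : δ^3 ≠ 0 := pow_ne_zero _ hδ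
  refine mul_left_cancel₀ hδ3 ?_
  rw [hF]
  have : δ ^ 3 * (Bt / K * ((g0.1*x+g0.2*y) * ((g1.1*x+g1.2*y) * (g2.1*x+g2.2*y))))
      = (Bt / K) * (δ^3 * ((g0.1*x+g0.2*y) * ((g1.1*x+g1.2*y) * (g2.1*x+g2.2*y)))) := by
    ring
  rw [this, hb]
  field_simp

lemma pd_quad (a0 a1 a2 a3 a4 a5 : ℝ) (x : V2) :
    pd1 (fun v : V2 => a0 + a1*v.1 + a2*v.2 + a3*v.1^2 + a4*(v.1*v.2) + a5*v.2^2) x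
      = a1 + 2*a3*x.1 + a4*x.2 ∧
    pd2 (fun v : V2 => a0 + a1*v.1 + a2*v.2 + a3*v.1^2 + a4*(v.1*v.2) + a5*v.2^2) x
      = a2 + a4*x.1 + 2*a5*x.2 := by
  have hc := pd1_congr (f := fun v : V2 => a0 + a1*v.1 + a2*v.2 + a3*v.1^2 + a4*(v.1*v.2) + a5*v.2^2)
    (g := fun v : V2 => a0 + a1 * v.1 + a2 * v.2 + a3 * (v.1*v.1) + a4 * (v.1*v.2)
        + a5 * (v.2*v.2) + 0 * (v.1*v.1*v.1) + 0 * (v.1*v.1*v.2) + 0 * (v.1*v.2*v.2)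
        + 0 * (v.2*v.2*v.2)) (fun v => by ring) x
  have hc2 := pd2_congr (f := fun v : V2 => a0 + a1*v.1 + a2*v.2 + a3*v.1^2 + a4*(v.1*v.2) + a5*v.2^2)
    (g := fun v : V2 => a0 + a1 * v.1 + a2 * v.2 + a3 * (v.1*v.1) + a4 * (v.1*v.2)
        + a5 * (v.2*v.2) + 0 * (v.1*v.1*v.1) + 0 * (v.1*v.1*v.2) + 0 * (v.1*v.2*v.2)
        + 0 * (v.2*v.2*v.2)) (fun v => by ring) x
  constructor
  · rw [hc, (pd_cubic a0 a1 a2 a3 a4 a5 0 0 0 0 x).1]; ring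
  · rw [hc2, (pd_cubic a0 a1 a2 a3 a4 a5 0 0 0 0 x).2]; ring

lemma quad_zero {A0 A1 A2 A3 A4 A5 : ℝ}
    (h : ∀ z : V2, A0 + A1*z.1 + A2*z.2 + A3*z.1^2 + A4*(z.1*z.2) + A5*z.2^2 = 0) :
    A0 = 0 ∧ A1 = 0 ∧ A2 = 0 ∧ A3 = 0 ∧ A4 = 0 ∧ A5 = 0 := by
  have h00 := h (0,0); have h10 := h (1,0); have h20 := h (2,0)
  have h01 := h (0,1); have h02 := h (0,2); have h11 := h (1,1)
  norm_num at h00 h10 h20 h01 h02 h11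
  refine ⟨h00, ?_, ?_, ?_, ?_, ?_⟩ <;> linarith

lemma two_eqs_zero {B C u1 u2 v1 v2 : ℝ} (h1 : B*u1 + C*u2 = 0) (h2 : B*v1 + C*v2 = 0)
    (hc : u1*v2 - u2*v1 ≠ 0) : B = 0 ∧ C = 0 := by
  constructor
  · have : B * (u1*v2 - u2*v1) = 0 := by linear_combination v2*h1 - u2*h2
    rcases mul_eq_zero.mp this with h | h
    · exact h
    · exact absurd h hc
  · have : C * (u1*v2 - u2*v1) = 0 := by linear_combination -v1*h1 + u1*h2
    rcases mul_eq_zero.mp this with h | h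
    · exact h
    · exact absurd h hc

lemma tangent_form (T : Triangle) (i : Fin 3) : T.tang i = (-(T.nrm i).2, (T.nrm i).1) := by
  set n1 := (T.nrm i).1; set n2 := (T.nrm i).2
  set t1 := (T.tang i).1; set t2 := (T.tang i).2
  have hn2 : n1^2 + n2^2 = 1 := by
    have hn := T.nrm_unit i
    rw [enorm2] at hn
    have h0 : (0:ℝ) ≤ n1^2 + n2^2 := by positivity
    nlinarith [Real.sq_sqrt h0, hn]
  have ht2 : t1^2 + t2^2 = 1 := by
    have ht := T.tang_unit i
    rw [enorm2] at ht
    have h0 : (0:ℝ) ≤ t1^2 + t2^2 := by positivity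
    nlinarith [Real.sq_sqrt h0, ht]
  have ho : n1*t1 + n2*t2 = 0 := T.nrm_orth i
  have hor : 0 < n1*t2 - n2*t1 := T.orient i
  have hsq : (n1*t2 - n2*t1)^2 = 1 := by
    linear_combination (t1^2+t2^2)*hn2 + ht2 - (n1*t1+n2*t2)*ho
  have hs : n1*t2 - n2*t1 = 1 := by
    have hfac : (n1*t2 - n2*t1 - 1)*(n1*t2 - n2*t1 + 1) = 0 := by linear_combination hsq
    rcases mul_eq_zero.mp hfac with h | h
    · linarith
    · linarith
  have hzero : (t1+n2)^2 + (t2-n1)^2 = 0 := by linear_combination ht2 + hn2 - 2*hs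
  have h1 : t1 + n2 = 0 := by
    have ha : (t1+n2)^2 = 0 := le_antisymm (by nlinarith [sq_nonneg (t2-n1)]) (sq_nonneg _)
    exact pow_eq_zero_iff two_ne_zero |>.mp ha
  have h2 : t2 - n1 = 0 := by
    have ha : (t2-n1)^2 = 0 := le_antisymm (by nlinarith [sq_nonneg (t1+n2)]) (sq_nonneg _)
    exact pow_eq_zero_iff two_ne_zero |>.mp ha
  refine Prod.ext ?_ ?_
  · show t1 = -n2; linarith
  · show t2 = n1; linarith

lemma pd_b (T : Triangle) (P Q c : Fin 3 → ℝ)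
    (hlam : ∀ i x, T.lam i x = P i * x.1 + Q i * x.2 + c i) (x : V2) :
    pd1 (fun y => T.lam 0 y * T.lam 1 y * T.lam 2 y) x
      = P 0 * (T.lam 1 x * T.lam 2 x) + P 1 * (T.lam 0 x * T.lam 2 x)
        + P 2 * (T.lam 0 x * T.lam 1 x) ∧
    pd2 (fun y => T.lam 0 y * T.lam 1 y * T.lam 2 y) x
      = Q 0 * (T.lam 1 x * T.lam 2 x) + Q 1 * (T.lam 0 x * T.lam 2 x)
        + Q 2 * (T.lam 0 x * T.lam 1 x) := by
  have hbex : ∀ z : V2, (fun y => T.lam 0 y * T.lam 1 y * T.lam 2 y) z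
      = (c 0 * c 1 * c 2)
        + (P 0 * c 1 * c 2 + c 0 * P 1 * c 2 + c 0 * c 1 * P 2) * z.1
        + (Q 0 * c 1 * c 2 + c 0 * Q 1 * c 2 + c 0 * c 1 * Q 2) * z.2
        + (P 0 * P 1 * c 2 + P 0 * c 1 * P 2 + c 0 * P 1 * P 2) * (z.1*z.1)
        + (P 0 * Q 1 * c 2 + P 0 * c 1 * Q 2 + Q 0 * P 1 * c 2 + c 0 * P 1 * Q 2
            + Q 0 * c 1 * P 2 + c 0 * Q 1 * P 2) * (z.1*z.2)
        + (Q 0 * Q 1 * c 2 + Q 0 * c 1 * Q 2 + c 0 * Q 1 * Q 2) * (z.2*z.2)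
        + (P 0 * P 1 * P 2) * (z.1*z.1*z.1)
        + (P 0 * P 1 * Q 2 + P 0 * Q 1 * P 2 + Q 0 * P 1 * P 2) * (z.1*z.1*z.2)
        + (P 0 * Q 1 * Q 2 + Q 0 * P 1 * Q 2 + Q 0 * Q 1 * P 2) * (z.1*z.2*z.2)
        + (Q 0 * Q 1 * Q 2) * (z.2*z.2*z.2) := by
    intro z
    simp only [hlam]
    ring
  constructor
  · rw [pd1_congr hbex x, (pd_cubic _ _ _ _ _ _ _ _ _ _ x).1]
    simp only [hlam]
    ring
  · rw [pd2_congr hbex x, (pd_cubic _ _ _ _ _ _ _ _ _ _ x).2]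
    simp only [hlam]
    ring

set_option maxHeartbeats 2000000 in
/-- `P^{1+}(T) := P1(T)² ⊕ span{curl(λ1 λ2 λ3)}` equals the subspace of
`P^{2-}(T)` of fields with constant divergence on `T`. The `∃!` expresses directness
of the sum. -/
theorem stmt1 (T : Triangle) (v : V2 → V2) :
    (∃! pc : (V2 → V2) × ℝ,
        IsVPolyDeg 1 pc.1 ∧
        ∀ x, v x = pc.1 x +
          pc.2 • curl2 (fun y => T.lam 0 y * T.lam 1 y * T.lam 2 y) x) ↔
      (memP2m T v ∧ ∃ c : ℝ, ∀ x ∈ triSet T, div2 v x = c) := by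
  classical
  choose Pa Qa Ca hlam using lam_form T
  set bfun : V2 → ℝ := fun y => T.lam 0 y * T.lam 1 y * T.lam 2 y with hbfun
  have hpd1b : ∀ x, pd1 bfun x = Pa 0 * (T.lam 1 x * T.lam 2 x)
      + Pa 1 * (T.lam 0 x * T.lam 2 x) + Pa 2 * (T.lam 0 x * T.lam 1 x) :=
    fun x => (pd_b T Pa Qa Ca hlam x).1
  have hpd2b : ∀ x, pd2 bfun x = Qa 0 * (T.lam 1 x * T.lam 2 x)
      + Qa 1 * (T.lam 0 x * T.lam 2 x) + Qa 2 * (T.lam 0 x * T.lam 1 x) :=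
    fun x => (pd_b T Pa Qa Ca hlam x).2
  obtain ⟨A1, A2, A3, A4, A5, A6, A7, A8, A9, hpd1bq, hpd2bq, hb3⟩ :
      ∃ A1 A2 A3 A4 A5 A6 A7 A8 A9 : ℝ,
        (∀ x : V2, pd1 bfun x = A1 + 2*A3*x.1 + A4*x.2 + 3*A6*x.1^2 + 2*A7*(x.1*x.2) + A8*x.2^2) ∧
        (∀ x : V2, pd2 bfun x = A2 + A4*x.1 + 2*A5*x.2 + A7*x.1^2 + 2*A8*(x.1*x.2) + 3*A9*x.2^2) ∧
        (∀ x y : ℝ, A6*x^3 + A7*x^2*y + A8*x*y^2 + A9*y^3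
          = (Pa 0*x+Qa 0*y) * ((Pa 1*x+Qa 1*y) * (Pa 2*x+Qa 2*y))) := by
    refine ⟨Pa 0 * Ca 1 * Ca 2 + Ca 0 * Pa 1 * Ca 2 + Ca 0 * Ca 1 * Pa 2,
      Qa 0 * Ca 1 * Ca 2 + Ca 0 * Qa 1 * Ca 2 + Ca 0 * Ca 1 * Qa 2,
      Pa 0 * Pa 1 * Ca 2 + Pa 0 * Ca 1 * Pa 2 + Ca 0 * Pa 1 * Pa 2,
      Pa 0 * Qa 1 * Ca 2 + Pa 0 * Ca 1 * Qa 2 + Qa 0 * Pa 1 * Ca 2 + Ca 0 * Pa 1 * Qa 2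
        + Qa 0 * Ca 1 * Pa 2 + Ca 0 * Qa 1 * Pa 2,
      Qa 0 * Qa 1 * Ca 2 + Qa 0 * Ca 1 * Qa 2 + Ca 0 * Qa 1 * Qa 2,
      Pa 0 * Pa 1 * Pa 2,
      Pa 0 * Pa 1 * Qa 2 + Pa 0 * Qa 1 * Pa 2 + Qa 0 * Pa 1 * Pa 2,
      Pa 0 * Qa 1 * Qa 2 + Qa 0 * Pa 1 * Qa 2 + Qa 0 * Qa 1 * Pa 2,
      Qa 0 * Qa 1 * Qa 2, ?_, ?_, ?_⟩
    · intro x; rw [hpd1b x]; simp only [hlam]; ring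
    · intro x; rw [hpd2b x]; simp only [hlam]; ring
    · intro x y; ring
  set U : Fin 3 → V2 := fun i => T.a (i+2) - T.a (i+1) with hUdef
  have hlv : ∀ i j, T.lam i (T.a j) = if i = j then (1:ℝ) else 0 := T.lam_apply
  have hS : ∀ i j : Fin 3, Pa i * (U j).1 + Qa i * (U j).2
      = T.lam i (T.a (j+2)) - T.lam i (T.a (j+1)) := by
    intro i j
    simp only [hUdef, Prod.fst_sub, Prod.snd_sub, hlam]
    ring
  have fin3cases : ∀ j : Fin 3, j = 0 ∨ j = 1 ∨ j = 2 := by decide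
  have hS00 : Pa 0 * (U 0).1 + Qa 0 * (U 0).2 = 0 := by
    rw [hS, show (0:Fin 3)+2 = 2 from by decide, show (0:Fin 3)+1 = 1 from by decide]
    simp [hlv]
  have hS01 : Pa 0 * (U 1).1 + Qa 0 * (U 1).2 = 1 := by
    rw [hS, show (1:Fin 3)+2 = 0 from by decide, show (1:Fin 3)+1 = 2 from by decide]
    simp [hlv]
  have hS02 : Pa 0 * (U 2).1 + Qa 0 * (U 2).2 = -1 := by
    rw [hS, show (2:Fin 3)+2 = 1 from by decide, show (2:Fin 3)+1 = 0 from by decide]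
    simp [hlv]
  have hS10 : Pa 1 * (U 0).1 + Qa 1 * (U 0).2 = -1 := by
    rw [hS, show (0:Fin 3)+2 = 2 from by decide, show (0:Fin 3)+1 = 1 from by decide]
    simp [hlv]
  have hS11 : Pa 1 * (U 1).1 + Qa 1 * (U 1).2 = 0 := by
    rw [hS, show (1:Fin 3)+2 = 0 from by decide, show (1:Fin 3)+1 = 2 from by decide]
    simp [hlv]
  have hS12 : Pa 1 * (U 2).1 + Qa 1 * (U 2).2 = 1 := by
    rw [hS, show (2:Fin 3)+2 = 1 from by decide, show (2:Fin 3)+1 = 0 from by decide]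
    simp [hlv]
  have hS20 : Pa 2 * (U 0).1 + Qa 2 * (U 0).2 = 1 := by
    rw [hS, show (0:Fin 3)+2 = 2 from by decide, show (0:Fin 3)+1 = 1 from by decide]
    simp [hlv]
  have hS21 : Pa 2 * (U 1).1 + Qa 2 * (U 1).2 = -1 := by
    rw [hS, show (1:Fin 3)+2 = 0 from by decide, show (1:Fin 3)+1 = 2 from by decide]
    simp [hlv]
  have hS22 : Pa 2 * (U 2).1 + Qa 2 * (U 2).2 = 0 := by
    rw [hS, show (2:Fin 3)+2 = 1 from by decide, show (2:Fin 3)+1 = 0 from by decide]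
    simp [hlv]
  have hedgelam : ∀ (i : Fin 3) (s : ℝ), T.lam i (epara T i s) = 0 := by
    intro i s
    have hseg : T.lam i (seg (T.a (i+1)) (T.a (i+2)) s)
        = (1-s) * T.lam i (T.a (i+1)) + s * T.lam i (T.a (i+2)) := by
      simp only [seg, hlam, Prod.fst_add, Prod.snd_add, Prod.smul_fst, Prod.smul_snd,
        smul_eq_mul, Prod.fst_sub, Prod.snd_sub]
      ring
    have hne1 : ∀ j : Fin 3, j ≠ j + 1 := by decide
    have hne2 : ∀ j : Fin 3, j ≠ j + 2 := by decide
    rw [epara, hseg, hlv, hlv, if_neg (hne1 i), if_neg (hne2 i)]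
    ring
  have hUk : ∀ i : Fin 3, ∃ k : ℝ, k ≠ 0 ∧ (U i).1 = k * (-(T.nrm i).2)
      ∧ (U i).2 = k * (T.nrm i).1 := by
    intro i
    obtain ⟨k, hk⟩ := T.tang_parallel i
    have htf := tangent_form T i
    refine ⟨k, ?_, ?_, ?_⟩
    · intro h0
      have h1 : T.a (i+2) = T.a (i+1) := by
        have := hk
        rw [h0, zero_smul] at this
        exact sub_eq_zero.mp this
      have h2 := T.indep.injective h1
      have hne : ∀ j : Fin 3, j+2 ≠ j+1 := by decide
      exact hne i h2
    · show (U i).1 = _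
      rw [hUdef]
      show (T.a (i+2) - T.a (i+1)).1 = _
      rw [hk, htf]
      simp [smul_eq_mul]
    · show (U i).2 = _
      rw [hUdef]
      show (T.a (i+2) - T.a (i+1)).2 = _
      rw [hk, htf]
      simp [smul_eq_mul]
  have hcross : cross2 (U 1) (U 2) ≠ 0 := by
    have h0 := cross_ne_of_indep T.indep
    intro h
    apply h0
    have heq : cross2 (U 1) (U 2) = cross2 (T.a 1 - T.a 0) (T.a 2 - T.a 0) := by
      simp only [hUdef, cross2, show (1:Fin 3)+2 = 0 from by decide,
        show (1:Fin 3)+1 = 2 from by decide, show (2:Fin 3)+2 = 1 from by decide,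
        show (2:Fin 3)+1 = 0 from by decide, Prod.fst_sub, Prod.snd_sub]
      ring
    rw [← heq]
    exact h
  have hcurlN : ∀ (i : Fin 3) (s : ℝ), dot2 (curl2 bfun (epara T i s)) (T.nrm i) = 0 := by
    intro i s
    set z := epara T i s with hz
    obtain ⟨k, hk0, hk1, hk2⟩ := hUk i
    have hgU : pd1 bfun z * (U i).1 + pd2 bfun z * (U i).2 = 0 := by
      rw [hpd1b z, hpd2b z]
      have hlz : T.lam i z = 0 := hedgelam i s
      rcases fin3cases i with rfl | rfl | rfl
      · linear_combination (T.lam 1 z * T.lam 2 z) * hS00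
          + (Pa 1 * T.lam 2 z * (U 0).1 + Pa 2 * T.lam 1 z * (U 0).1
            + Qa 1 * T.lam 2 z * (U 0).2 + Qa 2 * T.lam 1 z * (U 0).2) * hlz
      · linear_combination (T.lam 0 z * T.lam 2 z) * hS11
          + (Pa 0 * T.lam 2 z * (U 1).1 + Pa 2 * T.lam 0 z * (U 1).1
            + Qa 0 * T.lam 2 z * (U 1).2 + Qa 2 * T.lam 0 z * (U 1).2) * hlz
      · linear_combination (T.lam 0 z * T.lam 1 z) * hS22
          + (Pa 0 * T.lam 1 z * (U 2).1 + Pa 1 * T.lam 0 z * (U 2).1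
            + Qa 0 * T.lam 1 z * (U 2).2 + Qa 1 * T.lam 0 z * (U 2).2) * hlz
    rw [hk1, hk2] at hgU
    have h2 : k * (pd2 bfun z * (T.nrm i).1 - pd1 bfun z * (T.nrm i).2) = 0 := by
      linear_combination hgU
    have h3 := (mul_eq_zero.mp h2).resolve_left hk0
    simp only [curl2, dot2]
    linarith [h3]
  have huniq : ∀ (p : V2 → V2) (c : ℝ) (p' : V2 → V2) (c' : ℝ),
      IsVPolyDeg 1 p → IsVPolyDeg 1 p' →
      (∀ x, p x + c • curl2 bfun x = p' x + c' • curl2 bfun x) → p = p' ∧ c = c' := by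
    intro p c p' c' hp hp' heq
    obtain ⟨pa, pb, pc, hp1e⟩ := coeffs_of_isPolyDeg1 hp.1
    obtain ⟨qa, qb, qc, hp2e⟩ := coeffs_of_isPolyDeg1 hp.2
    obtain ⟨pa', pb', pc', hp1e'⟩ := coeffs_of_isPolyDeg1 hp'.1
    obtain ⟨qa', qb', qc', hp2e'⟩ := coeffs_of_isPolyDeg1 hp'.2
    have hcc : c = c' := by
      by_contra hne
      have hzz : ∀ z : V2, ((c-c')*A2 - (pa'-pa)) + ((c-c')*A4 - (pb'-pb))*z.1
          + (2*(c-c')*A5 - (pc'-pc))*z.2 + ((c-c')*A7)*z.1^2 + (2*(c-c')*A8)*(z.1*z.2)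
          + (3*(c-c')*A9)*z.2^2 = 0 := by
        intro z
        have h := congrArg Prod.fst (heq z)
        simp only [curl2, Prod.fst_add, Prod.smul_fst, smul_eq_mul] at h
        rw [hp1e z, hp1e' z, hpd2bq z] at h
        linear_combination h
      obtain ⟨-, -, -, e3, e4, e5⟩ := quad_zero hzz
      have hzz2 : ∀ z : V2, (-(c-c')*A1 - (qa'-qa)) + (-2*(c-c')*A3 - (qb'-qb))*z.1
          + (-(c-c')*A4 - (qc'-qc))*z.2 + (-3*(c-c')*A6)*z.1^2 + (-2*(c-c')*A7)*(z.1*z.2)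
          + (-(c-c')*A8)*z.2^2 = 0 := by
        intro z
        have h := congrArg Prod.snd (heq z)
        simp only [curl2, Prod.snd_add, Prod.smul_snd, smul_eq_mul] at h
        rw [hp2e z, hp2e' z, hpd1bq z] at h
        linear_combination h
      obtain ⟨-, -, -, f3, f4, f5⟩ := quad_zero hzz2
      have hsub : c - c' ≠ 0 := sub_ne_zero.mpr hne
      have hA6 : A6 = 0 := by
        rcases mul_eq_zero.mp f3 with h | h
        · exact absurd (by linarith : c - c' = 0) hsub
        · exact h
      have hA7 : A7 = 0 := by
        rcases mul_eq_zero.mp e3 with h | h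
        · exact absurd h hsub
        · exact h
      have hA8 : A8 = 0 := by
        rcases mul_eq_zero.mp e4 with h | h
        · exact absurd (by linarith : c - c' = 0) hsub
        · exact h
      have hA9 : A9 = 0 := by
        rcases mul_eq_zero.mp e5 with h | h
        · exact absurd (by linarith : c - c' = 0) hsub
        · exact h
      have hval := hb3 ((U 1).1 + (U 2).1/2) ((U 1).2 + (U 2).2/2)
      have hf0 : Pa 0*((U 1).1 + (U 2).1/2)+Qa 0*((U 1).2 + (U 2).2/2) = 1/2 := by
        linear_combination hS01 + hS02/2
      have hf1 : Pa 1*((U 1).1 + (U 2).1/2)+Qa 1*((U 1).2 + (U 2).2/2) = 1/2 := by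
        linear_combination hS11 + hS12/2
      have hf2 : Pa 2*((U 1).1 + (U 2).1/2)+Qa 2*((U 1).2 + (U 2).2/2) = -1 := by
        linear_combination hS21 + hS22/2
      rw [hA6, hA7, hA8, hA9, hf0, hf1, hf2] at hval
      norm_num at hval
    refine ⟨funext fun x => ?_, hcc⟩
    have h := heq x
    rw [hcc] at h
    exact add_right_cancel h
  constructor
  · rintro ⟨⟨p, c⟩, ⟨hp1, hpeq⟩, -⟩
    dsimp only at hp1 hpeq
    obtain ⟨pa, pb, pc, hp1e⟩ := coeffs_of_isPolyDeg1 hp1.1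
    obtain ⟨qa, qb, qc, hp2e⟩ := coeffs_of_isPolyDeg1 hp1.2
    have hv1 : ∀ x : V2, (v x).1 = (pa + c*A2) + (pb + c*A4)*x.1 + (pc + 2*c*A5)*x.2
        + (c*A7)*x.1^2 + (2*c*A8)*(x.1*x.2) + (3*c*A9)*x.2^2 := by
      intro x
      rw [hpeq x]
      simp only [curl2, Prod.fst_add, Prod.smul_fst, smul_eq_mul]
      rw [hp1e x, hpd2bq x]
      ring
    have hv2 : ∀ x : V2, (v x).2 = (qa - c*A1) + (qb - 2*c*A3)*x.1 + (qc - c*A4)*x.2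
        + (-3*c*A6)*x.1^2 + (-2*c*A7)*(x.1*x.2) + (-c*A8)*x.2^2 := by
      intro x
      rw [hpeq x]
      simp only [curl2, Prod.snd_add, Prod.smul_snd, smul_eq_mul]
      rw [hp2e x, hpd1bq x]
      ring
    refine ⟨⟨⟨isPolyDeg_congr hv1 (isPolyDeg_quad _ _ _ _ _ _),
      isPolyDeg_congr hv2 (isPolyDeg_quad _ _ _ _ _ _)⟩, ?_⟩, ?_⟩
    · intro i
      refine ⟨dot2 (p (epara T i 0)) (T.nrm i),
        (pb*(U i).1 + pc*(U i).2)*(T.nrm i).1 + (qb*(U i).1 + qc*(U i).2)*(T.nrm i).2,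
        fun s hs => ?_⟩
      have hsplit : dot2 (v (epara T i s)) (T.nrm i)
          = dot2 (p (epara T i s)) (T.nrm i) := by
        have h0 := hcurlN i s
        rw [hpeq (epara T i s)]
        simp only [dot2, curl2, Prod.fst_add, Prod.snd_add, Prod.smul_fst, Prod.smul_snd,
          smul_eq_mul] at h0 ⊢
        linear_combination c * h0
      rw [hsplit]
      simp only [dot2, epara, seg, hUdef]
      simp only [hp1e, hp2e]
      simp only [Prod.fst_add, Prod.snd_add, Prod.smul_fst, Prod.smul_snd, smul_eq_mul,
        Prod.fst_sub, Prod.snd_sub]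
      ring
    · refine ⟨pb + qc, fun x _ => ?_⟩
      have e1 := pd1_congr (f := fun y => (v y).1) hv1 x
      have e2 := pd2_congr (f := fun y => (v y).2) hv2 x
      simp only [div2]
      rw [e1, e2, (pd_quad _ _ _ _ _ _ x).1, (pd_quad _ _ _ _ _ _ x).2]
      ring
  · rintro ⟨⟨⟨hP1, hP2⟩, hN⟩, k, hdivc⟩
    obtain ⟨va, vb, vc, vd, ve, vf, hv1e⟩ := coeffs_of_isPolyDeg2 hP1
    obtain ⟨wa, wb, wc, wd, we, wf, hv2e⟩ := coeffs_of_isPolyDeg2 hP2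
    have hdiv : ∀ x : V2, div2 v x = (vb + wc) + (2*vd + we)*x.1 + (ve + 2*wf)*x.2 := by
      intro x
      simp only [div2]
      rw [pd1_congr (f := fun y => (v y).1) hv1e x, pd2_congr (f := fun y => (v y).2) hv2e x,
        (pd_quad _ _ _ _ _ _ x).1, (pd_quad _ _ _ _ _ _ x).2]
      ring
    have hmem : ∀ j : Fin 3, T.a j ∈ triSet T := fun j => subset_convexHull ℝ _ ⟨j, rfl⟩
    have hd0 := hdivc (T.a 0) (hmem 0)
    have hd1 := hdivc (T.a 1) (hmem 1)
    have hd2 := hdivc (T.a 2) (hmem 2)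
    rw [hdiv] at hd0 hd1 hd2
    obtain ⟨h2d, he1⟩ : (2*vd + we = 0) ∧ (ve + 2*wf = 0) := by
      have hcr := cross_ne_of_indep T.indep
      have hB : (2*vd+we)*((T.a 1 - T.a 0).1) + (ve+2*wf)*((T.a 1 - T.a 0).2) = 0 := by
        simp only [Prod.fst_sub, Prod.snd_sub]
        linear_combination hd1 - hd0
      have hC : (2*vd+we)*((T.a 2 - T.a 0).1) + (ve+2*wf)*((T.a 2 - T.a 0).2) = 0 := by
        simp only [Prod.fst_sub, Prod.snd_sub]
        linear_combination hd2 - hd0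
      exact two_eqs_zero hB hC hcr
    have hCq : ∀ i : Fin 3,
        (vd*(U i).1^2 + ve*((U i).1*(U i).2) + vf*(U i).2^2) * (T.nrm i).1
        + (wd*(U i).1^2 + we*((U i).1*(U i).2) + wf*(U i).2^2) * (T.nrm i).2 = 0 := by
      intro i
      obtain ⟨al, be, hnp⟩ := hN i
      have hq : ∀ s : ℝ, dot2 (v (epara T i s)) (T.nrm i)
          = dot2 (v (epara T i 0)) (T.nrm i)
            + (dot2 (v (epara T i 1)) (T.nrm i) - dot2 (v (epara T i 0)) (T.nrm i)
              - ((vd*(U i).1^2 + ve*((U i).1*(U i).2) + vf*(U i).2^2) * (T.nrm i).1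
                + (wd*(U i).1^2 + we*((U i).1*(U i).2) + wf*(U i).2^2) * (T.nrm i).2)) * s
            + ((vd*(U i).1^2 + ve*((U i).1*(U i).2) + vf*(U i).2^2) * (T.nrm i).1
                + (wd*(U i).1^2 + we*((U i).1*(U i).2) + wf*(U i).2^2) * (T.nrm i).2) * s^2 := by
        intro s
        simp only [dot2, epara, seg, hUdef]
        simp only [hv1e, hv2e]
        simp only [Prod.fst_add, Prod.snd_add, Prod.smul_fst, Prod.smul_snd, smul_eq_mul,
          Prod.fst_sub, Prod.snd_sub]
        ring
      have q0 := hnp 0 (Set.mem_Icc.mpr (by norm_num))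
      have qh := hnp (1/2) (Set.mem_Icc.mpr (by norm_num))
      have q1 := hnp 1 (Set.mem_Icc.mpr (by norm_num))
      rw [hq] at q0 qh q1
      linarith [q0, qh, q1]
    have hFU : ∀ i : Fin 3, (-wd/3)*(U i).1^3 + vd*(U i).1^2*(U i).2
        + (ve/2)*(U i).1*(U i).2^2 + (vf/3)*(U i).2^3 = 0 := by
      intro i
      obtain ⟨kk, hk0, hk1, hk2⟩ := hUk i
      have hCq' := hCq i
      rw [hk1, hk2] at hCq'
      rw [hk1, hk2]
      linear_combination (kk/3) * hCq'
        + ((kk*(-(T.nrm i).2))^2*(kk*(T.nrm i).1)/3)*h2d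
        + ((kk*(-(T.nrm i).2))*(kk*(T.nrm i).1)^2/6)*he1
    have hsum1 : (U 1).1 + (U 2).1 = -(U 0).1 := by
      simp only [hUdef, show (1:Fin 3)+2 = 0 from by decide, show (1:Fin 3)+1 = 2 from by decide,
        show (2:Fin 3)+2 = 1 from by decide, show (2:Fin 3)+1 = 0 from by decide,
        show (0:Fin 3)+2 = 2 from by decide, show (0:Fin 3)+1 = 1 from by decide,
        Prod.fst_sub]
      ring
    have hsum2 : (U 1).2 + (U 2).2 = -(U 0).2 := by
      simp only [hUdef, show (1:Fin 3)+2 = 0 from by decide, show (1:Fin 3)+1 = 2 from by decide,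
        show (2:Fin 3)+2 = 1 from by decide, show (2:Fin 3)+1 = 0 from by decide,
        show (0:Fin 3)+2 = 2 from by decide, show (0:Fin 3)+1 = 1 from by decide,
        Prod.snd_sub]
      ring
    obtain ⟨cc, hcF⟩ := key_cubic (U 1) (U 2) (Pa 0, Qa 0) (Pa 1, Qa 1) (Pa 2, Qa 2)
      (-wd/3) vd (ve/2) (vf/3) 1 (-1) 1 (-1) hcross hS01 hS02 hS11 hS12 hS21 hS22
      (by norm_num) (by norm_num) (hFU 1) (hFU 2)
      (by rw [hsum1, hsum2]; linear_combination -(hFU 0))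
    have hcF' : ∀ x y : ℝ, (-wd/3)*x^3 + vd*x^2*y + (ve/2)*x*y^2 + (vf/3)*y^3
        = cc*A6*x^3 + cc*A7*x^2*y + cc*A8*x*y^2 + cc*A9*y^3 := by
      intro x y
      have h := hcF x y
      simp only at h
      rw [h, ← hb3 x y]
      ring
    have h10 := hcF' 1 0
    have h01 := hcF' 0 1
    have h11 := hcF' 1 1
    have h1m := hcF' 1 (-1)
    norm_num at h10 h01 h11 h1m
    have hd1c : vd = cc*A7 := by linarith
    have he1c : ve/2 = cc*A8 := by linarith
    have hf1c : vf/3 = cc*A9 := by linarith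
    have hd2c : -wd/3 = cc*A6 := by linarith
    have hIs1 : IsPolyDeg 1 (fun x : V2 => (v x - cc • curl2 bfun x).1) := by
      refine isPolyDeg_congr
        (g := fun x : V2 => (va - cc*A2) + (vb - cc*A4)*x.1 + (vc - 2*cc*A5)*x.2) ?_
        (isPolyDeg_lin _ _ _)
      intro x
      simp only [Prod.fst_sub, Prod.smul_fst, smul_eq_mul, curl2]
      rw [hv1e x, hpd2bq x]
      linear_combination x.1^2*hd1c + 2*(x.1*x.2)*he1c + 3*x.2^2*hf1c
    have hIs2 : IsPolyDeg 1 (fun x : V2 => (v x - cc • curl2 bfun x).2) := by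
      refine isPolyDeg_congr
        (g := fun x : V2 => (wa + cc*A1) + (wb + 2*cc*A3)*x.1 + (wc + cc*A4)*x.2) ?_
        (isPolyDeg_lin _ _ _)
      intro x
      simp only [Prod.snd_sub, Prod.smul_snd, smul_eq_mul, curl2]
      rw [hv2e x, hpd1bq x]
      linear_combination (-3*x.1^2)*hd2c + (x.1*x.2)*h2d - 2*(x.1*x.2)*hd1c
        + (x.2^2/2)*he1 - x.2^2*he1c
    refine ⟨(fun x => v x - cc • curl2 bfun x, cc), ⟨⟨hIs1, hIs2⟩, ?_⟩, ?_⟩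
    · intro x
      apply Prod.ext <;>
        simp only [Prod.fst_add, Prod.snd_add, Prod.fst_sub, Prod.snd_sub, Prod.smul_fst,
          Prod.smul_snd, smul_eq_mul] <;> ring
    · rintro ⟨p', c'⟩ ⟨hp1', heq'⟩
      have hall : ∀ x, p' x + c' • curl2 bfun x
          = (v x - cc • curl2 bfun x) + cc • curl2 bfun x := by
        intro x
        rw [← heq' x]
        apply Prod.ext <;>
          simp only [Prod.fst_add, Prod.snd_add, Prod.fst_sub, Prod.snd_sub, Prod.smul_fst,
            Prod.smul_snd, smul_eq_mul] <;> ring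
      obtain ⟨hfun, hcc'⟩ := huniq p' c' _ cc hp1' ⟨hIs1, hIs2⟩ hall
      exact Prod.ext hfun hcc'
end
end

section
/- On a non-degenerate triangle T, the sequence R → P^{2+}(T) →(curl) P^{1+}(T) →(div) P0(T) is exact: curl has kernel the constants, its image is the divergence-free subspace of P^{1+}(T), and div maps P^{1+}(T) onto the constants. -/
open MeasureTheory
open scoped Classical

noncomputable section

/-- Membership in `P^{2+}(T) := P2(T) ⊕ span{λ1 λ2 λ3}`. -/
def memP2p (T : Triangle) (w : V2 → ℝ) : Prop :=
  ∃ (p : V2 → ℝ) (c : ℝ), IsPolyDeg 2 p ∧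
    ∀ x, w x = p x + c * (T.lam 0 x * T.lam 1 x * T.lam 2 x)

/-- Membership in `P^{1+}(T) := P1(T)² ⊕ span{curl(λ1 λ2 λ3)}`. -/
def memP1p (T : Triangle) (v : V2 → V2) : Prop :=
  ∃ (p : V2 → V2) (c : ℝ), IsVPolyDeg 1 p ∧
    ∀ x, v x = p x + c • curl2 (fun y => T.lam 0 y * T.lam 1 y * T.lam 2 y) x

open MvPolynomial

def cds (x : V2) : Fin 2 → ℝ := fun i => if i = 0 then x.1 else x.2

def evalF (P : MvPolynomial (Fin 2) ℝ) (x : V2) : ℝ := MvPolynomial.eval (cds x) P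

lemma isPolyDeg_def (k : ℕ) (f : V2 → ℝ) : IsPolyDeg k f ↔
    ∃ P : MvPolynomial (Fin 2) ℝ, P.totalDegree ≤ k ∧ ∀ x, f x = evalF P x := Iff.rfl

def dCLM (a b : ℝ) : V2 →L[ℝ] ℝ :=
  a • ContinuousLinearMap.fst ℝ ℝ ℝ + b • ContinuousLinearMap.snd ℝ ℝ ℝ

@[simp] lemma dCLM_apply (a b : ℝ) (v : V2) : dCLM a b v = a * v.1 + b * v.2 := by
  simp [dCLM, smul_eq_mul]

lemma hasFDerivAt_evalF (P : MvPolynomial (Fin 2) ℝ) (x : V2) :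
    HasFDerivAt (evalF P) (dCLM (evalF (pderiv 0 P) x) (evalF (pderiv 1 P) x)) x := by
  induction P using MvPolynomial.induction_on with
  | C a =>
      have h0 : dCLM (evalF (pderiv 0 (C a)) x) (evalF (pderiv 1 (C a)) x) = 0 := by
        refine ContinuousLinearMap.ext fun v => ?_; simp [evalF]
      rw [h0]
      have : evalF (C a : MvPolynomial (Fin 2) ℝ) = fun _ => a := by
        funext y; simp [evalF]
      rw [this]
      exact hasFDerivAt_const a x
  | add p q hp hq =>
      have h := hp.add hq
      have h1 : evalF (p + q) = fun y => evalF p y + evalF q y := by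
        funext y; simp [evalF]
      have h2 : dCLM (evalF (pderiv 0 (p + q)) x) (evalF (pderiv 1 (p + q)) x) =
          dCLM (evalF (pderiv 0 p) x) (evalF (pderiv 1 p) x) +
          dCLM (evalF (pderiv 0 q) x) (evalF (pderiv 1 q) x) := by
        refine ContinuousLinearMap.ext fun v => ?_; simp [evalF]; ring
      rw [h1, h2]; exact h
  | mul_X p i hp =>
      have hXi : HasFDerivAt (fun y : V2 => cds y i)
          (dCLM (evalF (pderiv 0 (X i)) x) (evalF (pderiv 1 (X i)) x)) x := by
        have hi : i = 0 ∨ i = 1 := by revert i; decide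
        rcases hi with rfl | rfl
        · have : (fun y : V2 => cds y 0) = Prod.fst := by funext y; simp [cds]
          rw [this]
          have h0 : dCLM (evalF (pderiv 0 (X 0)) x) (evalF (pderiv 1 (X 0)) x) =
              ContinuousLinearMap.fst ℝ ℝ ℝ := by
            refine ContinuousLinearMap.ext fun v => ?_
            simp [evalF, pderiv_X_self, pderiv_X_of_ne (show (0:Fin 2) ≠ 1 by decide)]
          rw [h0]; exact hasFDerivAt_fst
        · have : (fun y : V2 => cds y 1) = Prod.snd := by funext y; simp [cds]
          rw [this]
          have h0 : dCLM (evalF (pderiv 0 (X 1)) x) (evalF (pderiv 1 (X 1)) x) =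
              ContinuousLinearMap.snd ℝ ℝ ℝ := by
            refine ContinuousLinearMap.ext fun v => ?_
            simp [evalF, pderiv_X_self, pderiv_X_of_ne (show (1:Fin 2) ≠ 0 by decide)]
          rw [h0]; exact hasFDerivAt_snd
      have h := hp.mul hXi
      have h1 : evalF (p * X i) = fun y => evalF p y * cds y i := by
        funext y; simp [evalF, cds]
      have h2 : dCLM (evalF (pderiv 0 (p * X i)) x) (evalF (pderiv 1 (p * X i)) x) =
          evalF p x • dCLM (evalF (pderiv 0 (X i)) x) (evalF (pderiv 1 (X i)) x) +
          cds x i • dCLM (evalF (pderiv 0 p) x) (evalF (pderiv 1 p) x) := by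
        refine ContinuousLinearMap.ext fun v => ?_
        by_cases hi : i = 0
        · subst hi
          simp [evalF, pderiv_mul, cds, smul_eq_mul,
            pderiv_X_self, pderiv_X_of_ne (show (0:Fin 2) ≠ 1 by decide)]
          ring
        · have hi1 : i = 1 := by omega
          subst hi1
          simp [evalF, pderiv_mul, cds, smul_eq_mul,
            pderiv_X_self, pderiv_X_of_ne (show (1:Fin 2) ≠ 0 by decide)]
          ring
      rw [h1, h2]; exact h

lemma differentiable_evalF (P : MvPolynomial (Fin 2) ℝ) : Differentiable ℝ (evalF P) :=
  fun x => (hasFDerivAt_evalF P x).differentiableAt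

lemma pd1_evalF (P : MvPolynomial (Fin 2) ℝ) (x : V2) :
    pd1 (evalF P) x = evalF (pderiv 0 P) x := by
  rw [pd1, (hasFDerivAt_evalF P x).fderiv]; simp

lemma pd2_evalF (P : MvPolynomial (Fin 2) ℝ) (x : V2) :
    pd2 (evalF P) x = evalF (pderiv 1 P) x := by
  rw [pd2, (hasFDerivAt_evalF P x).fderiv]; simp

lemma fin2_sum (s : Fin 2 →₀ ℕ) : (s.sum fun _ n => n) = s 0 + s 1 := by
  rw [Finsupp.sum_fintype]
  · exact Fin.sum_univ_two _
  · intro i; rfl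

lemma totalDegree_pderiv_le (i : Fin 2) (P : MvPolynomial (Fin 2) ℝ) (k : ℕ)
    (h : P.totalDegree ≤ k + 1) : (pderiv i P).totalDegree ≤ k := by
  conv_lhs => rw [P.as_sum]
  rw [map_sum]
  refine le_trans (totalDegree_finset_sum _ _) (Finset.sup_le fun m hm => ?_)
  rw [pderiv_monomial]
  by_cases hz : coeff m P * (m i : ℝ) = 0
  · rcases mul_eq_zero.mp hz with h0 | h0 <;> simp [h0]
  · have hmi : m i ≠ 0 := by
      intro h0; exact hz (by simp [h0])
    refine le_trans (totalDegree_monomial_le _ _) ?_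
    have hdeg : (m.sum fun _ n => n) ≤ k + 1 := le_trans (le_totalDegree hm) h
    rw [fin2_sum] at hdeg
    have e0 : (m - Finsupp.single i (1 : ℕ)) (0 : Fin 2) = m 0 - (if i = 0 then 1 else 0) := by
      simp [Finsupp.sub_apply, Finsupp.single_apply]
    have e1 : (m - Finsupp.single i (1 : ℕ)) (1 : Fin 2) = m 1 - (if i = 1 then 1 else 0) := by
      simp [Finsupp.sub_apply, Finsupp.single_apply]
    show ((m - Finsupp.single i 1).sum fun _ n => n) ≤ k
    rw [fin2_sum, e0, e1]
    have hi : i = 0 ∨ i = 1 := by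
      rcases i with ⟨iv, hiv⟩
      interval_cases iv
      · exact Or.inl rfl
      · exact Or.inr rfl
    rcases hi with rfl | rfl <;> simp at hmi ⊢ <;> omega

lemma pderiv_comm01 (P : MvPolynomial (Fin 2) ℝ) :
    pderiv 0 (pderiv 1 P) = pderiv 1 (pderiv 0 P) := by
  induction P using MvPolynomial.induction_on' with
  | add p q hp hq => simp [map_add, hp, hq]
  | monomial s a =>
      simp only [pderiv_monomial]
      have e1 : (s - Finsupp.single (1 : Fin 2) (1 : ℕ)) (0 : Fin 2) = s 0 := by
        simp [Finsupp.sub_apply, Finsupp.single_apply]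
      have e2 : (s - Finsupp.single (0 : Fin 2) (1 : ℕ)) (1 : Fin 2) = s 1 := by
        simp [Finsupp.sub_apply, Finsupp.single_apply]
      have e3 : s - Finsupp.single (1 : Fin 2) (1 : ℕ) - Finsupp.single (0 : Fin 2) (1 : ℕ)
          = s - Finsupp.single (0 : Fin 2) (1 : ℕ) - Finsupp.single (1 : Fin 2) (1 : ℕ) := tsub_right_comm
      rw [e1, e2, e3]
      congr 1
      push_cast
      ring

lemma evalF_zero_of_ball {P : MvPolynomial (Fin 2) ℝ} {x0 : V2} {ε : ℝ} (hε : 0 < ε)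
    (h : ∀ x ∈ Metric.ball x0 ε, evalF P x = 0) : ∀ x, evalF P x = 0 := by
  intro y
  classical
  set g : Fin 2 → Polynomial ℝ :=
    fun i => Polynomial.C (cds x0 i) + Polynomial.C (cds y i - cds x0 i) * Polynomial.X with hg
  set q : Polynomial ℝ := MvPolynomial.aeval g P with hq
  have key : ∀ t : ℝ, q.eval t = evalF P (x0 + t • (y - x0)) := by
    intro t
    have hkey : ∀ Q : MvPolynomial (Fin 2) ℝ,
        Polynomial.eval t (MvPolynomial.aeval g Q) =
        MvPolynomial.eval (fun i => Polynomial.eval t (g i)) Q := by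
      intro Q
      induction Q using MvPolynomial.induction_on with
      | C a => simp
      | add p q hp hq => simp [map_add, hp, hq]
      | mul_X p i hp => simp [map_mul, hp]
    rw [hq, hkey]
    unfold evalF
    have harg : (fun i => Polynomial.eval t (g i)) = cds (x0 + t • (y - x0)) := by
      funext i
      have hcv : cds (x0 + t • (y - x0)) i = cds x0 i + t * (cds y i - cds x0 i) := by
        by_cases h0 : i = 0 <;> simp [cds, h0] <;> ring
      rw [hcv, hg]
      simp [mul_comm]
    rw [harg]
  have hδ : 0 < ε / (‖y - x0‖ + 1) := by positivity
  have hroots : Set.Ioo (0:ℝ) (ε / (‖y - x0‖ + 1)) ⊆ {t | q.IsRoot t} := by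
    intro t ht
    have hmem : x0 + t • (y - x0) ∈ Metric.ball x0 ε := by
      rw [Metric.mem_ball, dist_eq_norm]
      have : x0 + t • (y - x0) - x0 = t • (y - x0) := by abel
      rw [this, norm_smul]
      have ht0 : 0 < t := ht.1
      have ht1 : t < ε / (‖y - x0‖ + 1) := ht.2
      have hn : ‖y - x0‖ < ‖y - x0‖ + 1 := by linarith
      calc ‖t‖ * ‖y - x0‖ ≤ ‖t‖ * (‖y - x0‖ + 1) := by
            apply mul_le_mul_of_nonneg_left (by linarith) (norm_nonneg t)
        _ < ε := by
            rw [Real.norm_eq_abs, abs_of_pos ht0]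
            have := (lt_div_iff₀ (by positivity)).mp ht1
            linarith
    have := h _ hmem
    simpa [Polynomial.IsRoot, key t] using this
  have hq0 : q = 0 := by
    apply Polynomial.eq_zero_of_infinite_isRoot
    exact Set.Infinite.mono hroots (Set.Ioo_infinite hδ)
  have h1 := key 1
  rw [hq0, Polynomial.eval_zero] at h1
  have h2 : x0 + (1:ℝ) • (y - x0) = y := by
    rw [one_smul]; abel
  rw [h2] at h1
  exact h1.symm

lemma IsPolyDeg.mono {k l : ℕ} {f : V2 → ℝ} (h : IsPolyDeg k f) (hkl : k ≤ l) :
    IsPolyDeg l f := by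
  obtain ⟨P, hd, hP⟩ := h
  exact ⟨P, le_trans hd hkl, hP⟩

lemma isPolyDeg_const (k : ℕ) (c : ℝ) : IsPolyDeg k (fun _ => c) :=
  ⟨C c, by simp [totalDegree_C], fun x => by simp [evalF]⟩

lemma isPolyDeg_fst : IsPolyDeg 1 (fun x : V2 => x.1) :=
  ⟨X 0, by simp [totalDegree_X], fun x => by simp [evalF, cds]⟩

lemma isPolyDeg_snd : IsPolyDeg 1 (fun x : V2 => x.2) :=
  ⟨X 1, by simp [totalDegree_X], fun x => by simp [evalF, cds]⟩

lemma IsPolyDeg.add {k : ℕ} {f g : V2 → ℝ} (hf : IsPolyDeg k f) (hg : IsPolyDeg k g) :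
    IsPolyDeg k (fun x => f x + g x) := by
  obtain ⟨P, hd, hP⟩ := hf
  obtain ⟨Q, hd', hQ⟩ := hg
  exact ⟨P + Q, le_trans (totalDegree_add P Q) (max_le hd hd'),
    fun x => by simp [hP x, hQ x, evalF]⟩

lemma IsPolyDeg.mul {k l : ℕ} {f g : V2 → ℝ} (hf : IsPolyDeg k f) (hg : IsPolyDeg l g) :
    IsPolyDeg (k + l) (fun x => f x * g x) := by
  obtain ⟨P, hd, hP⟩ := hf
  obtain ⟨Q, hd', hQ⟩ := hg
  exact ⟨P * Q, le_trans (totalDegree_mul P Q) (add_le_add hd hd'),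
    fun x => by simp [hP x, hQ x, evalF]⟩

lemma IsPolyDeg.const_mul {k : ℕ} {f : V2 → ℝ} (hf : IsPolyDeg k f) (c : ℝ) :
    IsPolyDeg k (fun x => c * f x) := by
  have := (isPolyDeg_const 0 c).mul hf
  simpa using this

lemma isPolyDeg_affine (a b c : ℝ) : IsPolyDeg 1 (fun x : V2 => a + b * x.1 + c * x.2) :=
  (((isPolyDeg_const 1 a).add ((isPolyDeg_fst.const_mul b))).add (isPolyDeg_snd.const_mul c))

lemma evalF_const_of_deg0 {Q : MvPolynomial (Fin 2) ℝ} (h : Q.totalDegree = 0) (x y : V2) :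
    evalF Q x = evalF Q y := by
  have hsupp : ∀ m ∈ Q.support, m = 0 := by
    intro m hm
    have := (totalDegree_eq_zero_iff _ Q).mp h m hm
    ext j; exact this j
  unfold evalF
  conv_lhs => rw [Q.as_sum]
  conv_rhs => rw [Q.as_sum]
  rw [map_sum, map_sum]
  apply Finset.sum_congr rfl
  intro m hm
  rw [hsupp m hm]
  simp [eval_monomial]

lemma affine_of_isPolyDeg1 {f : V2 → ℝ} (h : IsPolyDeg 1 f) :
    ∃ a b c : ℝ, ∀ x : V2, f x = a + b * x.1 + c * x.2 := by
  obtain ⟨P, hdeg, hP⟩ := h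
  set b := evalF (pderiv 0 P) (0, 0) with hbdef
  set c := evalF (pderiv 1 P) (0, 0) with hcdef
  have hb : ∀ x, evalF (pderiv 0 P) x = b := fun x =>
    evalF_const_of_deg0 (Nat.le_zero.mp (totalDegree_pderiv_le 0 P 0 hdeg)) x (0, 0)
  have hc : ∀ x, evalF (pderiv 1 P) x = c := fun x =>
    evalF_const_of_deg0 (Nat.le_zero.mp (totalDegree_pderiv_le 1 P 0 hdeg)) x (0, 0)
  set Q := P - C b * X 0 - C c * X 1 with hQdef
  have hQ0 : pderiv 0 Q = pderiv 0 P - C b := by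
    simp [hQdef, pderiv_mul, pderiv_X_self, pderiv_X_of_ne (show (1:Fin 2) ≠ 0 by decide)]
  have hQ1 : pderiv 1 Q = pderiv 1 P - C c := by
    simp [hQdef, pderiv_mul, pderiv_X_self, pderiv_X_of_ne (show (0:Fin 2) ≠ 1 by decide)]
  have hgrad : ∀ x, fderiv ℝ (evalF Q) x = 0 := by
    intro x
    rw [(hasFDerivAt_evalF Q x).fderiv]
    refine ContinuousLinearMap.ext fun v => ?_
    have h0 : evalF (pderiv 0 Q) x = 0 := by
      rw [hQ0]; unfold evalF; rw [map_sub]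
      have := hb x; unfold evalF at this; rw [this]; simp
    have h1 : evalF (pderiv 1 Q) x = 0 := by
      rw [hQ1]; unfold evalF; rw [map_sub]
      have := hc x; unfold evalF at this; rw [this]; simp
    simp [h0, h1]
  have hconst : ∀ x : V2, evalF Q x = evalF Q (0, 0) := fun x =>
    is_const_of_fderiv_eq_zero (differentiable_evalF Q) hgrad x (0, 0)
  refine ⟨evalF Q (0, 0), b, c, fun x => ?_⟩
  have hsplit : evalF Q x = evalF P x - b * x.1 - c * x.2 := by
    unfold evalF
    rw [hQdef]
    simp [cds]
  rw [show f x = evalF P x from hP x]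
  have := hconst x
  rw [hsplit] at this
  linarith

lemma curl2_evalF (W : MvPolynomial (Fin 2) ℝ) (x : V2) :
    curl2 (evalF W) x = (evalF (pderiv 1 W) x, - evalF (pderiv 0 W) x) := by
  unfold curl2
  rw [pd1_evalF, pd2_evalF]

lemma lam_affine_form (T : Triangle) (i : Fin 3) :
    ∃ a b c : ℝ, ∀ x : V2, T.lam i x = a + b * x.1 + c * x.2 := by
  obtain ⟨L, c0, hL⟩ := T.lam_affine i
  refine ⟨c0, L (1, 0), L (0, 1), fun x => ?_⟩
  rw [hL x]
  have hx : (x : V2) = x.1 • ((1:ℝ), (0:ℝ)) + x.2 • ((0:ℝ), (1:ℝ)) := by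
    ext <;> simp
  calc L x + c0 = L (x.1 • ((1:ℝ), (0:ℝ)) + x.2 • ((0:ℝ), (1:ℝ))) + c0 := by rw [← hx]
    _ = c0 + L (1, 0) * x.1 + L (0, 1) * x.2 := by
        rw [L.map_add, L.map_smul, L.map_smul, smul_eq_mul, smul_eq_mul]; ring

lemma lam_isPolyDeg (T : Triangle) (i : Fin 3) : IsPolyDeg 1 (T.lam i) := by
  obtain ⟨a, b, c, h⟩ := lam_affine_form T i
  have := isPolyDeg_affine a b c
  obtain ⟨P, hd, hP⟩ := this
  exact ⟨P, hd, fun x => by rw [h x]; exact hP x⟩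

lemma lamprod_rep (T : Triangle) : ∃ B : MvPolynomial (Fin 2) ℝ, B.totalDegree ≤ 3 ∧
    ∀ y, T.lam 0 y * T.lam 1 y * T.lam 2 y = evalF B y := by
  have h : IsPolyDeg 3 (fun y => T.lam 0 y * T.lam 1 y * T.lam 2 y) := by
    have h01 : IsPolyDeg 2 (fun y => T.lam 0 y * T.lam 1 y) :=
      (lam_isPolyDeg T 0).mul (lam_isPolyDeg T 1)
    exact h01.mul (lam_isPolyDeg T 2)
  exact h

lemma memP2p_rep (T : Triangle) {w : V2 → ℝ} (h : memP2p T w) :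
    ∃ W : MvPolynomial (Fin 2) ℝ, W.totalDegree ≤ 3 ∧ ∀ x, w x = evalF W x := by
  obtain ⟨p, cc, ⟨P, hPd, hP⟩, hw⟩ := h
  obtain ⟨B, hBd, hB⟩ := lamprod_rep T
  refine ⟨P + C cc * B, ?_, fun x => ?_⟩
  · refine le_trans (totalDegree_add _ _) (max_le (le_trans hPd (by norm_num)) ?_)
    refine le_trans (totalDegree_mul _ _) ?_
    simp [totalDegree_C, hBd]
  · rw [hw x, show p x = evalF P x from hP x, hB x]
    simp [evalF]

lemma a_mem_triSet (T : Triangle) (i : Fin 3) : T.a i ∈ triSet T :=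
  subset_convexHull ℝ _ (Set.mem_range_self i)

lemma exists_ball_subset_triSet (T : Triangle) :
    ∃ x0 ε, 0 < ε ∧ Metric.ball x0 ε ⊆ triSet T := by
  have hspan : affineSpan ℝ (Set.range T.a) = ⊤ := by
    rw [T.indep.affineSpan_eq_top_iff_card_eq_finrank_add_one]
    simp
  have hne : (interior (triSet T)).Nonempty := by
    rw [triSet, interior_convexHull_nonempty_iff_affineSpan_eq_top]
    exact hspan
  obtain ⟨x0, hx0⟩ := hne
  obtain ⟨ε, hε, hball⟩ := Metric.isOpen_iff.mp isOpen_interior x0 hx0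
  exact ⟨x0, ε, hε, hball.trans interior_subset⟩

lemma memP1p_rep (T : Triangle) {v : V2 → V2} (h : memP1p T v) :
    ∃ (a1 b1 c1 a2 b2 c2 cc : ℝ) (B : MvPolynomial (Fin 2) ℝ), B.totalDegree ≤ 3 ∧
      (∀ y, T.lam 0 y * T.lam 1 y * T.lam 2 y = evalF B y) ∧
      ∀ x, v x = (a1 + b1 * x.1 + c1 * x.2 + cc * evalF (pderiv 1 B) x,
                  a2 + b2 * x.1 + c2 * x.2 - cc * evalF (pderiv 0 B) x) := by
  obtain ⟨p, cc, ⟨hp1, hp2⟩, hv⟩ := h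
  obtain ⟨a1, b1, c1, h1⟩ := affine_of_isPolyDeg1 hp1
  obtain ⟨a2, b2, c2, h2⟩ := affine_of_isPolyDeg1 hp2
  obtain ⟨B, hBd, hB⟩ := lamprod_rep T
  refine ⟨a1, b1, c1, a2, b2, c2, cc, B, hBd, hB, fun x => ?_⟩
  have hlp : (fun y => T.lam 0 y * T.lam 1 y * T.lam 2 y) = evalF B := funext hB
  have hc : curl2 (fun y => T.lam 0 y * T.lam 1 y * T.lam 2 y) x
      = (evalF (pderiv 1 B) x, - evalF (pderiv 0 B) x) := by
    rw [hlp]; exact curl2_evalF B x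
  rw [hv x, hc]
  ext
  · show (p x).1 + cc * evalF (pderiv 1 B) x = _
    rw [h1 x]
  · show (p x).2 + cc * (- evalF (pderiv 0 B) x) = _
    rw [h2 x]; ring

lemma div2_of_rep {a1 b1 c1 a2 b2 c2 cc : ℝ} {B : MvPolynomial (Fin 2) ℝ} {v : V2 → V2}
    (hv : ∀ x, v x = (a1 + b1 * x.1 + c1 * x.2 + cc * evalF (pderiv 1 B) x,
                  a2 + b2 * x.1 + c2 * x.2 - cc * evalF (pderiv 0 B) x)) :
    ∀ x, div2 v x = b1 + c2 := by
  intro x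
  have h1 : (fun y => (v y).1)
      = evalF (C a1 + C b1 * X 0 + C c1 * X 1 + C cc * pderiv 1 B) := by
    funext y; rw [hv y]; simp [evalF, cds]
  have h2 : (fun y => (v y).2)
      = evalF (C a2 + C b2 * X 0 + C c2 * X 1 - C cc * pderiv 0 B) := by
    funext y; rw [hv y]; simp [evalF, cds]
  unfold div2
  rw [h1, h2, pd1_evalF, pd2_evalF]
  have hp1 : pderiv 0 (C a1 + C b1 * X 0 + C c1 * X 1 + C cc * pderiv 1 B)
      = C b1 + C cc * pderiv 0 (pderiv 1 B) := by
    simp [pderiv_mul, pderiv_X_self, pderiv_X_of_ne (show (1 : Fin 2) ≠ 0 by decide)]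
  have hp2 : pderiv 1 (C a2 + C b2 * X 0 + C c2 * X 1 - C cc * pderiv 0 B)
      = C c2 - C cc * pderiv 1 (pderiv 0 B) := by
    simp [pderiv_mul, pderiv_X_self, pderiv_X_of_ne (show (0 : Fin 2) ≠ 1 by decide)]
  rw [hp1, hp2, pderiv_comm01]
  simp [evalF]

/-- exactness of `ℝ → P^{2+}(T) --curl--> P^{1+}(T) --div--> P0(T)`:
curl maps `P^{2+}` into `P^{1+}` with kernel the constants, its image is the
divergence-free subspace of `P^{1+}(T)`, and div maps `P^{1+}(T)` onto the constants. -/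
theorem stmt3 (T : Triangle) :
    (∀ w, memP2p T w → memP1p T (curl2 w)) ∧
    (∀ w, memP2p T w →
      ((∀ x ∈ triSet T, curl2 w x = 0) ↔ ∃ c : ℝ, ∀ x ∈ triSet T, w x = c)) ∧
    (∀ v, memP1p T v →
      ((∀ x ∈ triSet T, div2 v x = 0) ↔
        ∃ w, memP2p T w ∧ ∀ x ∈ triSet T, v x = curl2 w x)) ∧
    (∀ v, memP1p T v → ∃ c : ℝ, ∀ x ∈ triSet T, div2 v x = c) ∧
    (∀ c : ℝ, ∃ v, memP1p T v ∧ ∀ x ∈ triSet T, div2 v x = c) := by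
  obtain ⟨B, hBd, hB⟩ := lamprod_rep T
  have hlp : (fun y => T.lam 0 y * T.lam 1 y * T.lam 2 y) = evalF B := funext hB
  -- Part 1
  have part1 : ∀ w, memP2p T w → memP1p T (curl2 w) := by
    intro w hw
    obtain ⟨p, cc, ⟨P, hPd, hP⟩, hweq⟩ := hw
    have hwrep : w = evalF (P + C cc * B) := by
      funext x
      rw [hweq x, show p x = evalF P x from hP x, hB x]
      simp [evalF]
    refine ⟨fun x => (evalF (pderiv 1 P) x, evalF (-(pderiv 0 P)) x), cc, ⟨?_, ?_⟩, fun x => ?_⟩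
    · exact ⟨pderiv 1 P, totalDegree_pderiv_le 1 P 1 hPd, fun x => rfl⟩
    · refine ⟨-(pderiv 0 P), ?_, fun x => rfl⟩
      rw [totalDegree_neg]
      exact totalDegree_pderiv_le 0 P 1 hPd
    · rw [hwrep, curl2_evalF, hlp, curl2_evalF]
      have e0 : pderiv 0 (P + C cc * B) = pderiv 0 P + C cc * pderiv 0 B := by
        simp [pderiv_mul]
      have e1 : pderiv 1 (P + C cc * B) = pderiv 1 P + C cc * pderiv 1 B := by
        simp [pderiv_mul]
      rw [e0, e1]
      ext
      · simp [evalF, Prod.smul_fst, smul_eq_mul]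
      · simp [evalF, Prod.smul_snd, smul_eq_mul]
        ring
  -- Part 2
  have part2 : ∀ w, memP2p T w →
      ((∀ x ∈ triSet T, curl2 w x = 0) ↔ ∃ c : ℝ, ∀ x ∈ triSet T, w x = c) := by
    intro w hw
    obtain ⟨W, hWd, hWrep⟩ := memP2p_rep T hw
    have hwfun : w = evalF W := funext hWrep
    constructor
    · intro hcurl
      refine ⟨w (T.a 0), fun x hx => ?_⟩
      have hder : ∀ z ∈ triSet T, HasFDerivWithinAt w (0 : V2 →L[ℝ] ℝ) (triSet T) z := by
        intro z hz
        have h0 := hcurl z hz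
        have hpd2 : evalF (pderiv 1 W) z = 0 := by
          have h1 : pd2 w z = 0 := by
            have := congrArg Prod.fst h0
            simpa [curl2] using this
          rw [← pd2_evalF, ← hwfun]
          exact h1
        have hpd1 : evalF (pderiv 0 W) z = 0 := by
          have h1 : pd1 w z = 0 := by
            have := congrArg Prod.snd h0
            simp [curl2] at this
            simpa using this
          rw [← pd1_evalF, ← hwfun]
          exact h1
        have hz0 : dCLM (evalF (pderiv 0 W) z) (evalF (pderiv 1 W) z) = 0 := by
          rw [hpd1, hpd2]
          refine ContinuousLinearMap.ext fun u => ?_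
          simp
        have := hasFDerivAt_evalF W z
        rw [← hwfun, hz0] at this
        exact this.hasFDerivWithinAt
      have hconv : Convex ℝ (triSet T) := convex_convexHull ℝ _
      have hbound : ∀ z ∈ triSet T, ‖(0 : V2 →L[ℝ] ℝ)‖ ≤ 0 := by simp
      have hineq := hconv.norm_image_sub_le_of_norm_hasFDerivWithin_le
        (f' := fun _ => (0 : V2 →L[ℝ] ℝ)) hder hbound (a_mem_triSet T 0) hx
      have : ‖w x - w (T.a 0)‖ ≤ 0 := by
        simpa using hineq
      have := norm_le_zero_iff.mp this
      linarith [sub_eq_zero.mp this]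
    · rintro ⟨c, hc⟩ x hx
      obtain ⟨x0, ε, hε, hball⟩ := exists_ball_subset_triSet T
      have hzero : ∀ y, evalF (W - C c) y = 0 := by
        refine evalF_zero_of_ball (x0 := x0) hε fun y hy => ?_
        have hyT := hball hy
        have : evalF W y = c := by rw [← hWrep y]; exact hc y hyT
        simp [evalF] at this ⊢
        simp [this]
      have hwc : w = fun _ => c := by
        funext y
        have := hzero y
        simp [evalF] at this
        rw [hWrep y]
        unfold evalF
        linarith
      rw [hwc]
      unfold curl2 pd1 pd2
      simp
  -- common rep facts for parts 3-4
  have part4 : ∀ v, memP1p T v → ∃ c : ℝ, ∀ x ∈ triSet T, div2 v x = c := by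
    intro v hv
    obtain ⟨a1, b1, c1, a2, b2, c2, cc, B', _, _, hrep⟩ := memP1p_rep T hv
    exact ⟨b1 + c2, fun x _ => div2_of_rep hrep x⟩
  have part3 : ∀ v, memP1p T v →
      ((∀ x ∈ triSet T, div2 v x = 0) ↔
        ∃ w, memP2p T w ∧ ∀ x ∈ triSet T, v x = curl2 w x) := by
    intro v hv
    obtain ⟨a1, b1, c1, a2, b2, c2, cc, B', hBd', hB', hrep⟩ := memP1p_rep T hv
    have hdivconst : ∀ x, div2 v x = b1 + c2 := div2_of_rep hrep
    have hlp' : (fun y => T.lam 0 y * T.lam 1 y * T.lam 2 y) = evalF B' := funext hB'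
    constructor
    · intro hdiv
      have hsum : b1 + c2 = 0 := by
        rw [← hdivconst (T.a 0)]
        exact hdiv (T.a 0) (a_mem_triSet T 0)
      have hc2 : c2 = -b1 := by linarith
      set W0 : MvPolynomial (Fin 2) ℝ :=
        C a1 * X 1 + C (c1/2) * (X 1 * X 1) + C (-a2) * X 0 +
          C (-(b2/2)) * (X 0 * X 0) + C b1 * (X 0 * X 1) with hW0
      have hW0d : W0.totalDegree ≤ 2 := by
        have hC : ∀ (t : MvPolynomial (Fin 2) ℝ) (a : ℝ) (k : ℕ), t.totalDegree ≤ k →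
            (C a * t).totalDegree ≤ k := by
          intro t a k ht
          refine le_trans (totalDegree_mul _ _) ?_
          simpa [totalDegree_C] using ht
        have hX : (X 0 : MvPolynomial (Fin 2) ℝ).totalDegree ≤ 2 := by
          simp [totalDegree_X]
        have hX1 : (X 1 : MvPolynomial (Fin 2) ℝ).totalDegree ≤ 2 := by
          simp [totalDegree_X]
        have hXX : ∀ i j : Fin 2, ((X i * X j : MvPolynomial (Fin 2) ℝ)).totalDegree ≤ 2 := by
          intro i j
          refine le_trans (totalDegree_mul _ _) ?_
          simp [totalDegree_X]
        refine le_trans (totalDegree_add _ _) (max_le ?_ (hC _ _ _ (hXX 0 1)))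
        refine le_trans (totalDegree_add _ _) (max_le ?_ (hC _ _ _ (hXX 0 0)))
        refine le_trans (totalDegree_add _ _) (max_le ?_ (hC _ _ _ hX))
        exact le_trans (totalDegree_add _ _) (max_le (hC _ _ _ hX1) (hC _ _ _ (hXX 1 1)))
      set w : V2 → ℝ := fun x => evalF W0 x + cc * (T.lam 0 x * T.lam 1 x * T.lam 2 x) with hwdef
      refine ⟨w, ⟨evalF W0, cc, ⟨W0, hW0d, fun x => rfl⟩, fun x => rfl⟩, fun x _ => ?_⟩
      have hwrep : w = evalF (W0 + C cc * B') := by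
        funext y
        rw [hwdef]
        simp only []
        rw [hB' y]
        simp [evalF]
      rw [hwrep, curl2_evalF]
      have e0 : pderiv 0 (W0 + C cc * B') = pderiv 0 W0 + C cc * pderiv 0 B' := by
        simp [pderiv_mul]
      have e1 : pderiv 1 (W0 + C cc * B') = pderiv 1 W0 + C cc * pderiv 1 B' := by
        simp [pderiv_mul]
      rw [e0, e1, hrep x]
      have hp1 : evalF (pderiv 1 W0) x = a1 + b1 * x.1 + c1 * x.2 := by
        rw [hW0]
        simp [pderiv_mul, pderiv_X_self, pderiv_X_of_ne (show (0 : Fin 2) ≠ 1 by decide),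
          evalF, cds]
        ring
      have hp0 : evalF (pderiv 0 W0) x = -a2 - b2 * x.1 + b1 * x.2 := by
        rw [hW0]
        simp [pderiv_mul, pderiv_X_self, pderiv_X_of_ne (show (1 : Fin 2) ≠ 0 by decide),
          evalF, cds]
        ring
      ext
      · show _ = evalF (pderiv 1 W0 + C cc * pderiv 1 B') x
        simp only [evalF, map_add, map_mul, eval_C]
        rw [show MvPolynomial.eval (cds x) (pderiv 1 W0) = evalF (pderiv 1 W0) x from rfl, hp1]
      · show _ = - evalF (pderiv 0 W0 + C cc * pderiv 0 B') x
        simp only [evalF, map_add, map_mul, eval_C]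
        rw [show MvPolynomial.eval (cds x) (pderiv 0 W0) = evalF (pderiv 0 W0) x from rfl, hp0]
        rw [hc2]
        simp [evalF]
        ring
    · rintro ⟨w, hw, hvw⟩ x hx
      obtain ⟨W, hWd, hWrep⟩ := memP2p_rep T hw
      have hwfun : w = evalF W := funext hWrep
      obtain ⟨x0, ε, hε, hball⟩ := exists_ball_subset_triSet T
      have hx0 : x0 ∈ triSet T := hball (Metric.mem_ball_self hε)
      -- div2 v is constant; show it vanishes at x0
      have hev : ∀ y ∈ Metric.ball x0 ε, v y = curl2 w y := fun y hy => hvw y (hball hy)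
      have hnb : Metric.ball x0 ε ∈ nhds x0 := Metric.ball_mem_nhds x0 hε
      have hev1 : (fun y => (v y).1) =ᶠ[nhds x0] (fun y => (curl2 w y).1) :=
        Filter.eventuallyEq_of_mem hnb fun y hy => by rw [hev y hy]
      have hev2 : (fun y => (v y).2) =ᶠ[nhds x0] (fun y => (curl2 w y).2) :=
        Filter.eventuallyEq_of_mem hnb fun y hy => by rw [hev y hy]
      have hdiveq : div2 v x0 = div2 (curl2 w) x0 := by
        unfold div2 pd1 pd2
        rw [hev1.fderiv_eq, hev2.fderiv_eq]
      have hcurlrep : curl2 w = fun y => (evalF (pderiv 1 W) y, evalF (-(pderiv 0 W)) y) := by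
        funext y
        rw [hwfun, curl2_evalF]
        simp [evalF]
      have hdivzero : div2 (curl2 w) x0 = 0 := by
        rw [hcurlrep]
        unfold div2
        rw [show (fun y => ((fun y => (evalF (pderiv 1 W) y, evalF (-(pderiv 0 W)) y)) y).1)
            = evalF (pderiv 1 W) from rfl]
        rw [show (fun y => ((fun y => (evalF (pderiv 1 W) y, evalF (-(pderiv 0 W)) y)) y).2)
            = evalF (-(pderiv 0 W)) from rfl]
        rw [pd1_evalF, pd2_evalF]
        have : pderiv 1 (-(pderiv 0 W)) = -(pderiv 0 (pderiv 1 W)) := by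
          rw [map_neg, pderiv_comm01]
        rw [this]
        simp [evalF]
      rw [hdivconst x, ← hdivconst x0, hdiveq, hdivzero]
  -- Part 5
  have part5 : ∀ c : ℝ, ∃ v, memP1p T v ∧ ∀ x ∈ triSet T, div2 v x = c := by
    intro c
    refine ⟨fun x => (c * x.1, 0), ⟨fun x => (c * x.1, 0), 0, ⟨?_, ?_⟩, fun x => by simp⟩,
      fun x _ => ?_⟩
    · exact isPolyDeg_fst.const_mul c
    · exact isPolyDeg_const 1 0
    · have hrep : ∀ x : V2, (fun x : V2 => ((c * x.1 : ℝ), (0:ℝ))) x =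
          ((0 : ℝ) + c * x.1 + 0 * x.2 + 0 * evalF (pderiv 1 0) x,
           (0 : ℝ) + 0 * x.1 + 0 * x.2 - 0 * evalF (pderiv 0 0) x) := by
        intro x; ext <;> simp
      have := div2_of_rep hrep x
      simpa using this
  exact ⟨part1, part2, part3, part4, part5⟩
end
end
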